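/- arXiv:1310.6950 — 6 statements merged into one kernel-verified Lean document; each statement's English description precedes it below -/
import Mathlib

section
/- Let A be a real n×n matrix with a simple strictly dominant eigenvalue λ₁ = ρ(A) > 0, with corresponding right eigenvector x₁ and left eigenvector x₁* normalized so that x₁* x₁ = 1. Then (1/ρ(A)^k) A^k converges (entrywise) to the rank-one matrix x₁ ⊗ x₁* (i.e., the matrix with entries x₁^i (x₁*)^j) as k → ∞. -/
open Matrix Polynomial Filter

variable {n : ℕ}

/-- The minor of `A` with row set `r` and column set `c` (taken in increasing order). -/
noncomputable def minor (A : Matrix (Fin n) (Fin n) ℝ) (r c : Finset (Fin n))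
    (h : c.card = r.card) : ℝ :=
  (A.submatrix (fun i : Fin r.card => (r.orderIsoOfFin rfl i).1)
      (fun i : Fin r.card => (c.orderIsoOfFin h i).1)).det

/-- The `j`-th compound matrix of `A`: the matrix of all `j × j` minors of `A`,
indexed by the `j`-element subsets of `Fin n` (ordered increasingly). -/
noncomputable def compound (A : Matrix (Fin n) (Fin n) ℝ) (j : ℕ) :
    Matrix {s : Finset (Fin n) // s.card = j} {s : Finset (Fin n) // s.card = j} ℝ :=
  Matrix.of fun r c =>
    (A.submatrix (fun i : Fin j => (r.1.orderIsoOfFin r.2 i).1)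
      (fun i : Fin j => (c.1.orderIsoOfFin c.2 i).1)).det

/-- Characteristic polynomial of a real matrix, viewed over `ℂ`. -/
noncomputable def charC {m : Type*} [Fintype m] [DecidableEq m] (A : Matrix m m ℝ) :
    Polynomial ℂ :=
  (A.map (Complex.ofReal)).charpoly

/-- `lam` is a positive simple strictly dominant eigenvalue of `A` with a strictly
positive eigenvector (the strong Perron–Frobenius property, with specified value). -/
def StrongPFAt {m : Type*} [Fintype m] [DecidableEq m] (A : Matrix m m ℝ) (lam : ℝ) : Prop :=
  0 < lam ∧ (charC A).IsRoot (lam : ℂ) ∧ (charC A).rootMultiplicity (lam : ℂ) = 1 ∧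
    (∀ μ : ℂ, (charC A).IsRoot μ → μ ≠ (lam : ℂ) → ‖μ‖ < lam) ∧
    ∃ v : m → ℝ, (∀ i, 0 < v i) ∧ A *ᵥ v = lam • v

/-- The strong Perron–Frobenius property. -/
def StrongPF {m : Type*} [Fintype m] [DecidableEq m] (A : Matrix m m ℝ) : Prop :=
  ∃ lam : ℝ, StrongPFAt A lam

/-- `M` is strictly `J`-sign-symmetric (for the given set `J`). -/
def SJSWith (J : Finset (Fin n)) (M : Matrix (Fin n) (Fin n) ℝ) : Prop :=
  ∀ i j : Fin n, ((i ∈ J ↔ j ∈ J) → 0 < M i j) ∧ (¬(i ∈ J ↔ j ∈ J) → M i j < 0)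

/-- `M` is strictly J-sign-symmetric for some `J ⊆ {1,…,n}`. -/
def SJS (M : Matrix (Fin n) (Fin n) ℝ) : Prop :=
  ∃ J : Finset (Fin n), SJSWith J M

/-- Eventually strictly J-sign-symmetric. -/
def ESJS (A : Matrix (Fin n) (Fin n) ℝ) : Prop :=
  ∃ k0 : ℕ, ∀ k ≥ k0, SJS (A ^ k)

/-- Eventually (entrywise) positive. -/
def EvPos {m : Type*} [Fintype m] [DecidableEq m] (A : Matrix m m ℝ) : Prop :=
  ∃ k0 : ℕ, ∀ k ≥ k0, ∀ i j, 0 < (A ^ k) i j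

/-- Strictly totally positive: all minors of all orders are positive. -/
def STP (A : Matrix (Fin n) (Fin n) ℝ) : Prop :=
  ∀ (r c : Finset (Fin n)) (h : c.card = r.card), r.Nonempty → 0 < minor A r c h

/-- Totally nonnegative: all minors of all orders are nonnegative. -/
def TotNonneg (A : Matrix (Fin n) (Fin n) ℝ) : Prop :=
  ∀ (r c : Finset (Fin n)) (h : c.card = r.card), 0 ≤ minor A r c h

/-- Eventually strictly totally positive. -/
def ESTP (A : Matrix (Fin n) (Fin n) ℝ) : Prop :=
  ∃ k0 : ℕ, ∀ k ≥ k0, STP (A ^ k)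

/-- The checkerboard transform `S* = ((-1)^(i+j) s_ij)`. -/
def checker (S : Matrix (Fin n) (Fin n) ℝ) : Matrix (Fin n) (Fin n) ℝ :=
  Matrix.of fun i j => (-1 : ℝ) ^ ((i : ℕ) + (j : ℕ)) * S i j

/-- The exterior product `x₀ ∧ ⋯ ∧ x_{j-1}` of the first `j` of the vectors `x`,
as a vector indexed by `j`-element subsets of `Fin n`. -/
noncomputable def wedge (x : Fin n → Fin n → ℝ) (j : ℕ) (hj : j ≤ n) :
    {s : Finset (Fin n) // s.card = j} → ℝ :=
  fun s => (Matrix.of fun a b : Fin j => x (Fin.castLE hj b) (s.1.orderIsoOfFin s.2 a).1).det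


private lemma eval_charpoly_eq {m : Type*} [Fintype m] [DecidableEq m]
    (M : Matrix m m ℂ) (t : ℂ) :
    M.charpoly.eval t = (t • (1 : Matrix m m ℂ) - M).det := by
  rw [Matrix.charpoly, ← Polynomial.coe_evalRingHom, RingHom.map_det]
  congr 1
  ext i j
  by_cases h : i = j
  · subst h
    simp [Matrix.charmatrix_apply_eq, Matrix.sub_apply, Matrix.smul_apply,
      Matrix.one_apply_eq]
  · simp [Matrix.charmatrix_apply_ne _ _ _ h, Matrix.sub_apply, Matrix.smul_apply,
      Matrix.one_apply_ne h]

private lemma isRoot_charpoly_iff {m : Type*} [Fintype m] [DecidableEq m]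
    (M : Matrix m m ℂ) (t : ℂ) :
    M.charpoly.IsRoot t ↔ ∃ v, v ≠ 0 ∧ M *ᵥ v = t • v := by
  rw [Polynomial.IsRoot, eval_charpoly_eq, ← Matrix.exists_mulVec_eq_zero_iff]
  simp only [Matrix.sub_mulVec, Matrix.smul_mulVec, Matrix.one_mulVec, sub_eq_zero]
  constructor
  · rintro ⟨v, hv, e⟩; exact ⟨v, hv, e.symm⟩
  · rintro ⟨v, hv, e⟩; exact ⟨v, hv, e.symm⟩

private lemma entry_pow_tendsto_zero {N : ℕ} (C : Matrix (Fin N) (Fin N) ℂ)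
    (h : ∀ μ : ℂ, C.charpoly.IsRoot μ → ‖μ‖ < 1) (i j : Fin N) :
    Tendsto (fun k : ℕ => (C ^ k) i j) atTop (nhds 0) := by
  letI : SeminormedRing (Matrix (Fin N) (Fin N) ℂ) := Matrix.linftyOpSemiNormedRing
  letI : NormedRing (Matrix (Fin N) (Fin N) ℂ) := Matrix.linftyOpNormedRing
  letI : NormedAlgebra ℂ (Matrix (Fin N) (Fin N) ℂ) := Matrix.linftyOpNormedAlgebra
  have hS : ∀ μ ∈ spectrum ℂ C, μ ∈ C.charpoly.roots.toFinset := by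
    intro μ hμ
    rw [Multiset.mem_toFinset, Polynomial.mem_roots']
    refine ⟨C.charpoly_monic.ne_zero, ?_⟩
    rw [Polynomial.IsRoot, eval_charpoly_eq]
    by_contra hdet
    exact (spectrum.mem_iff.mp hμ)
      (by rw [Algebra.algebraMap_eq_smul_one]
          exact (Matrix.isUnit_iff_isUnit_det _).mpr (isUnit_iff_ne_zero.mpr hdet))
  have hr1 : (C.charpoly.roots.toFinset.sup fun μ => ‖μ‖₊) < 1 := by
    rw [Finset.sup_lt_iff (by norm_num : (⊥ : NNReal) < 1)]
    intro μ hμ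
    have hir := (Polynomial.mem_roots'.mp (Multiset.mem_toFinset.mp hμ)).2
    have h' : ‖μ‖ < 1 := by exact h μ hir
    exact_mod_cast h'
  have hsrle : spectralRadius ℂ C ≤
      ((C.charpoly.roots.toFinset.sup fun μ => ‖μ‖₊ : NNReal) : ENNReal) :=
    iSup₂_le fun μ hμ => ENNReal.coe_le_coe.2 (Finset.le_sup (hS μ hμ))
  have hsr : spectralRadius ℂ C < 1 :=
    lt_of_le_of_lt hsrle (by exact_mod_cast hr1)
  obtain ⟨c, hc1, hc2⟩ := ENNReal.lt_iff_exists_nnreal_btwn.mp hsr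
  have hc3 : (c : ℝ) < 1 := by
    have : c < 1 := by exact_mod_cast hc2
    exact_mod_cast this
  have hgel := spectrum.pow_nnnorm_pow_one_div_tendsto_nhds_spectralRadius C
  have hev := (hgel.eventually_lt_const hc1).and (eventually_ge_atTop 1)
  have hbound : ∀ᶠ k in atTop, ‖C ^ k‖ ≤ (c : ℝ) ^ k := by
    refine hev.mono fun k ⟨hk, hk1⟩ => ?_
    have hknz : (k : ℝ) ≠ 0 := Nat.cast_ne_zero.2 (by omega)
    have h1 : ((‖C ^ k‖₊ : ENNReal) ^ (1 / (k : ℝ))) ^ (k : ℝ)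
        ≤ (c : ENNReal) ^ (k : ℝ) := ENNReal.rpow_le_rpow hk.le (Nat.cast_nonneg k)
    rw [← ENNReal.rpow_mul, one_div, inv_mul_cancel₀ hknz, ENNReal.rpow_one,
      ENNReal.rpow_natCast, ← ENNReal.coe_pow] at h1
    have h2 : ‖C ^ k‖₊ ≤ c ^ k := by exact_mod_cast h1
    calc ‖C ^ k‖ = ((‖C ^ k‖₊ : NNReal) : ℝ) := (coe_nnnorm _).symm
      _ ≤ ((c ^ k : NNReal) : ℝ) := by exact_mod_cast h2
      _ = (c : ℝ) ^ k := by push_cast; ring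
  have hnorm0 : Tendsto (fun k : ℕ => ‖C ^ k‖) atTop (nhds 0) :=
    squeeze_zero' (Eventually.of_forall fun k => norm_nonneg _) hbound
      (tendsto_pow_atTop_nhds_zero_of_lt_one c.coe_nonneg hc3)
  have hent : ∀ k : ℕ, ‖(C ^ k) i j‖ ≤ ‖C ^ k‖ := by
    intro k
    have : ‖(C ^ k) i j‖₊ ≤ ‖C ^ k‖₊ := by
      rw [Matrix.linfty_opNNNorm_def]
      exact le_trans
        (Finset.single_le_sum (f := fun j' => ‖(C ^ k) i j'‖₊)
          (fun _ _ => zero_le) (Finset.mem_univ j))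
        (Finset.le_sup (f := fun i' => ∑ j' : Fin N, ‖(C ^ k) i' j'‖₊) (Finset.mem_univ i))
    exact_mod_cast this
  exact squeeze_zero_norm hent hnorm0

private lemma two_le_rootMult {N : ℕ} (M : Matrix (Fin N) (Fin N) ℂ) (t : ℂ)
    (u v : Fin N → ℂ) (huv : u ≠ v)
    (hs : LinearIndepOn ℂ id ({u, v} : Set (Fin N → ℂ)))
    (hu : M *ᵥ u = t • u) (hv : M *ᵥ v = t • v) :
    2 ≤ M.charpoly.rootMultiplicity t := by
  classical
  let b := Module.Basis.extend hs
  haveI : Fintype ↥(hs.extend (Set.subset_univ _)) := FiniteDimensional.fintypeBasisIndex b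
  let f := Matrix.toLin' M
  let pb := Pi.basisFun ℂ (Fin N)
  have e1 : LinearMap.toMatrix pb pb f = M := by
    show LinearMap.toMatrix pb pb (Matrix.toLin' M) = M
    rw [← Matrix.toLin_eq_toLin']
    exact LinearMap.toMatrix_toLin pb pb M
  have hfc : M.charpoly = (LinearMap.toMatrix b b f).charpoly := by
    rw [LinearMap.charpoly_toMatrix, ← e1, LinearMap.charpoly_toMatrix]
  set Nm := LinearMap.toMatrix b b f with hNm
  have hmemu : u ∈ ({u, v} : Set (Fin N → ℂ)) := Set.mem_insert _ _
  have hmemv : v ∈ ({u, v} : Set (Fin N → ℂ)) := Set.mem_insert_of_mem _ rfl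
  let i0 : ↥(hs.extend (Set.subset_univ _)) :=
    ⟨u, hs.subset_extend (Set.subset_univ _) hmemu⟩
  let i1 : ↥(hs.extend (Set.subset_univ _)) :=
    ⟨v, hs.subset_extend (Set.subset_univ _) hmemv⟩
  have hne : i1 ≠ i0 := fun e => huv (congrArg Subtype.val e).symm
  have hb0 : b i0 = u := Module.Basis.extend_apply_self hs i0
  have hb1 : b i1 = v := Module.Basis.extend_apply_self hs i1
  have hcol : ∀ (iX : ↥(hs.extend (Set.subset_univ _))) (w : Fin N → ℂ),
      b iX = w → M *ᵥ w = t • w → ∀ j, Nm j iX = if iX = j then t else 0 := by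
    intro iX w hbw hw j
    rw [hNm, LinearMap.toMatrix_apply]
    have hfw : f (b iX) = t • b iX := by
      rw [hbw]; show Matrix.toLin' M w = t • w; rw [Matrix.toLin'_apply, hw]
    rw [hfw]
    simp [Finsupp.single_apply]
  have hcol0 := hcol i0 u hb0 hu
  have hcol1 := hcol i1 v hb1 hv
  -- factor charmatrix determinant
  set cm := charmatrix Nm with hcm
  have hcmcol : ∀ (iX : ↥(hs.extend (Set.subset_univ _))),
      (∀ j, Nm j iX = if iX = j then t else 0) →
      ∀ j, cm j iX = (X - C t) * (Pi.single (M := fun _ => ℂ[X]) iX 1) j := by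
    intro iX hX j
    by_cases hj : j = iX
    · subst hj
      rw [hcm, charmatrix_apply_eq, hX j, if_pos rfl, Pi.single_eq_same, mul_one]
    · rw [hcm, charmatrix_apply_ne _ _ _ hj, hX j, if_neg (Ne.symm hj),
        Pi.single_eq_of_ne hj, mul_zero, map_zero, neg_zero]
  set w0 : ↥(hs.extend (Set.subset_univ _)) → ℂ[X] := Pi.single i0 1 with hw0
  set w1 : ↥(hs.extend (Set.subset_univ _)) → ℂ[X] := Pi.single i1 1 with hw1
  let cm1 := cm.updateCol i0 w0
  have e0 : cm.det = (X - C t) * cm1.det := by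
    conv_lhs => rw [← Matrix.updateCol_eq_self cm i0]
    have hfun : (fun j => cm j i0) = (X - C t) • w0 :=
      funext fun j => by
        rw [hcmcol i0 hcol0 j, hw0, Pi.smul_apply, smul_eq_mul]
    rw [hfun, Matrix.det_updateCol_smul]
  let cm2 := cm1.updateCol i1 w1
  have e2 : cm1.det = (X - C t) * cm2.det := by
    conv_lhs => rw [← Matrix.updateCol_eq_self cm1 i1]
    have hfun : (fun j => cm1 j i1) = (X - C t) • w1 := by
      funext j
      have hcc : cm1 j i1 = cm j i1 := Matrix.updateCol_ne hne
      rw [hcc, hcmcol i1 hcol1 j, hw1, Pi.smul_apply, smul_eq_mul]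
    rw [hfun, Matrix.det_updateCol_smul]
  have hdvd : (X - C t) ^ 2 ∣ Nm.charpoly := by
    refine ⟨cm2.det, ?_⟩
    show cm.det = _
    rw [e0, e2]; ring
  rw [hfc]
  exact (Polynomial.le_rootMultiplicity_iff (Matrix.charpoly_monic Nm).ne_zero).mpr hdvd

/-- power method convergence to the rank-one spectral projection. -/

theorem stmt0 (A : Matrix (Fin n) (Fin n) ℝ) (lam : ℝ) (x xs : Fin n → ℝ)
    (hpos : 0 < lam)
    (hroot : (charC A).IsRoot (lam : ℂ))
    (hsimple : (charC A).rootMultiplicity (lam : ℂ) = 1)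
    (hdom : ∀ μ : ℂ, (charC A).IsRoot μ → μ ≠ (lam : ℂ) → ‖μ‖ < lam)
    (hx : A *ᵥ x = lam • x) (hxs : Aᵀ *ᵥ xs = lam • xs)
    (hnorm : ∑ i, xs i * x i = 1) :
    Tendsto (fun k : ℕ => (lam ^ k)⁻¹ • A ^ k) atTop
      (nhds (Matrix.of fun i j => x i * xs j)) := by
  classical
  have hlam0 : (lam : ℂ) ≠ 0 := by exact_mod_cast hpos.ne'
  set Mc : Matrix (Fin n) (Fin n) ℂ := A.map Complex.ofReal with hMc
  set xc : Fin n → ℂ := fun i => (x i : ℂ) with hxc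
  set xsc : Fin n → ℂ := fun i => (xs i : ℂ) with hxsc
  have hnormc : ∑ i, xsc i * xc i = 1 := by
    simp only [hxc, hxsc]; exact_mod_cast hnorm
  have hMx : Mc *ᵥ xc = (lam : ℂ) • xc := by
    funext i
    have h := congrFun hx i
    simp only [Matrix.mulVec, dotProduct, Pi.smul_apply, smul_eq_mul] at h ⊢
    simp only [hMc, hxc, Matrix.map_apply]
    exact_mod_cast h
  have hMxs : ∀ j, ∑ k, Mc k j * xsc k = (lam : ℂ) * xsc j := by
    intro j
    have h := congrFun hxs j
    simp only [Matrix.mulVec, dotProduct, Matrix.transpose_apply, Pi.smul_apply,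
      smul_eq_mul] at h
    simp only [hMc, hxsc, Matrix.map_apply]
    exact_mod_cast h
  set Pc : Matrix (Fin n) (Fin n) ℂ := Matrix.of (fun i j => xc i * xsc j) with hPc
  have hPP : Pc * Pc = Pc := by
    ext i j
    simp only [hPc, Matrix.mul_apply, Matrix.of_apply]
    calc ∑ k, xc i * xsc k * (xc k * xsc j)
        = (∑ k, xsc k * xc k) * (xc i * xsc j) := by
          rw [Finset.sum_mul]; exact Finset.sum_congr rfl fun k _ => by ring
      _ = xc i * xsc j := by rw [hnormc, one_mul]
  have hAP : Mc * Pc = (lam : ℂ) • Pc := by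
    ext i j
    simp only [hPc, Matrix.mul_apply, Matrix.of_apply, Matrix.smul_apply, smul_eq_mul]
    have hrow : ∑ k, Mc i k * xc k = (lam : ℂ) * xc i := by
      have h := congrFun hMx i
      simpa [Matrix.mulVec, dotProduct] using h
    calc ∑ k, Mc i k * (xc k * xsc j) = (∑ k, Mc i k * xc k) * xsc j := by
          rw [Finset.sum_mul]; exact Finset.sum_congr rfl fun k _ => by ring
      _ = (lam : ℂ) * (xc i * xsc j) := by rw [hrow]; ring
  have hPA : Pc * Mc = (lam : ℂ) • Pc := by
    ext i j
    simp only [hPc, Matrix.mul_apply, Matrix.of_apply, Matrix.smul_apply, smul_eq_mul]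
    calc ∑ k, xc i * xsc k * Mc k j = xc i * ∑ k, Mc k j * xsc k := by
          rw [Finset.mul_sum]; exact Finset.sum_congr rfl fun k _ => by ring
      _ = (lam : ℂ) * (xc i * xsc j) := by rw [hMxs j]; ring
  set Qc : Matrix (Fin n) (Fin n) ℂ := Mc - (lam : ℂ) • Pc with hQc
  have hMQ : Qc + (lam : ℂ) • Pc = Mc := by rw [hQc]; abel
  have hQP : Qc * Pc = 0 := by
    rw [hQc, Matrix.sub_mul, hAP, smul_mul_assoc, hPP, sub_self]
  have hPQ : Pc * Qc = 0 := by
    rw [hQc, Matrix.mul_sub, hPA, mul_smul_comm, hPP, sub_self]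
  have hQkP : ∀ m : ℕ, Qc ^ (m + 1) * Pc = 0 := by
    intro m; rw [pow_succ, Matrix.mul_assoc, hQP, Matrix.mul_zero]
  have hpowk : ∀ m : ℕ, Mc ^ (m + 1) = Qc ^ (m + 1) + ((lam : ℂ) ^ (m + 1)) • Pc := by
    intro m
    induction m with
    | zero => simpa [pow_one] using hMQ.symm
    | succ m ih =>
      calc Mc ^ (m + 2) = Mc ^ (m + 1) * Mc := by rw [pow_succ]
        _ = (Qc ^ (m + 1) + ((lam : ℂ) ^ (m + 1)) • Pc) * (Qc + (lam : ℂ) • Pc) := by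
            rw [ih, hMQ]
        _ = Qc ^ (m + 2) + ((lam : ℂ) ^ (m + 2)) • Pc := by
            rw [Matrix.add_mul, Matrix.mul_add, Matrix.mul_add]
            rw [mul_smul_comm, hQkP m, smul_zero, ← pow_succ]
            rw [smul_mul_assoc, hPQ, smul_zero]
            rw [smul_mul_assoc, mul_smul_comm, hPP, smul_smul, ← pow_succ]
            abel
  set Bc : Matrix (Fin n) (Fin n) ℂ := (lam : ℂ)⁻¹ • Qc with hBc
  have hBpow : ∀ m : ℕ, Bc ^ (m + 1) = (((lam : ℂ) ^ (m + 1))⁻¹) • Qc ^ (m + 1) := by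
    intro m; rw [hBc, _root_.smul_pow, inv_pow]
  have hmat : ∀ m : ℕ, (((lam : ℂ) ^ (m + 1))⁻¹) • Mc ^ (m + 1) = Bc ^ (m + 1) + Pc := by
    intro m
    rw [hpowk m, smul_add, hBpow m, smul_smul, inv_mul_cancel₀ (pow_ne_zero _ hlam0), one_smul]
  have hroots : ∀ ν : ℂ, Bc.charpoly.IsRoot ν → ‖ν‖ < 1 := by
    intro ν hν
    obtain ⟨v, hv0, hBv⟩ := (isRoot_charpoly_iff Bc ν).mp hν
    have hQv : Qc *ᵥ v = ((lam : ℂ) * ν) • v := by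
      have h1 : Bc *ᵥ v = (lam : ℂ)⁻¹ • (Qc *ᵥ v) := by rw [hBc, Matrix.smul_mulVec]
      have h2 : (lam : ℂ) • (Bc *ᵥ v) = Qc *ᵥ v := by rw [h1, smul_inv_smul₀ hlam0]
      rw [← h2, hBv, smul_smul]
    have hMv : Mc *ᵥ v = ((lam : ℂ) * ν) • v + (lam : ℂ) • (Pc *ᵥ v) := by
      conv_lhs => rw [← hMQ]
      rw [Matrix.add_mulVec, hQv, Matrix.smul_mulVec]
    have hPv : ((lam : ℂ) * ν) • (Pc *ᵥ v) = 0 := by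
      have h1 : Pc *ᵥ (Mc *ᵥ v) = (lam : ℂ) • (Pc *ᵥ v) := by
        rw [Matrix.mulVec_mulVec, hPA, Matrix.smul_mulVec]
      have h2 : Pc *ᵥ (Mc *ᵥ v) = ((lam : ℂ) * ν) • (Pc *ᵥ v) + (lam : ℂ) • (Pc *ᵥ v) := by
        rw [hMv, Matrix.mulVec_add, Matrix.mulVec_smul, Matrix.mulVec_smul,
          Matrix.mulVec_mulVec, hPP]
      exact (right_eq_add.mp (h1.symm.trans h2)).symm ▸ rfl
    by_cases hν0 : ν = 0
    · rw [hν0]; simpa using zero_lt_one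
    · have hPv0 : Pc *ᵥ v = 0 := by
        rcases smul_eq_zero.mp hPv with h | h
        · rcases mul_eq_zero.mp h with h' | h'
          · exact absurd h' hlam0
          · exact absurd h' hν0
        · exact h
      have hMv' : Mc *ᵥ v = ((lam : ℂ) * ν) • v := by rw [hMv, hPv0, smul_zero, add_zero]
      by_cases hμ : (lam : ℂ) * ν = (lam : ℂ)
      · exfalso
        have hMvl : Mc *ᵥ v = (lam : ℂ) • v := by rw [hMv', hμ]
        have hxne : ∃ i0, x i0 ≠ 0 := by
          by_contra hall; push_neg at hall
          have h10 : (1 : ℝ) = 0 := by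
            rw [← hnorm]
            exact Finset.sum_eq_zero fun i _ => by simp [hall i]
          norm_num at h10
        obtain ⟨i0, hi0⟩ := hxne
        have hdot : ∑ jj, xsc jj * v jj = 0 := by
          have h0 := congrFun hPv0 i0
          simp only [Matrix.mulVec, dotProduct, hPc, Matrix.of_apply,
            Pi.zero_apply] at h0
          have h1 : xc i0 * (∑ jj, xsc jj * v jj) = 0 := by
            rw [Finset.mul_sum, ← h0]
            exact Finset.sum_congr rfl fun k _ => by ring
          rcases mul_eq_zero.mp h1 with h | h
          · refine absurd ?_ hi0
            have h' : ((x i0 : ℝ) : ℂ) = 0 := h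
            exact_mod_cast h'
          · exact h
        have hxcv : xc ≠ v := by
          intro e
          have h1 : (1 : ℂ) = 0 := by rw [← hnormc, ← hdot, e]
          norm_num at h1
        have hli : LinearIndepOn ℂ id ({xc, v} : Set (Fin n → ℂ)) := by
          rw [show ({xc, v} : Set (Fin n → ℂ)) = insert xc {v} from rfl]
          rw [linearIndepOn_insert (by simpa using hxcv)]
          refine ⟨(linearIndepOn_singleton_iff ℂ).mpr hv0, ?_⟩
          simp only [Set.image_id, id_eq, Set.image_id']
          rw [Submodule.mem_span_singleton]
          rintro ⟨a, ha⟩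
          have h1 : (1 : ℂ) = a * 0 := by
            calc (1 : ℂ) = ∑ jj, xsc jj * xc jj := hnormc.symm
              _ = a * ∑ jj, xsc jj * v jj := by
                  rw [Finset.mul_sum]
                  refine Finset.sum_congr rfl fun k _ => ?_
                  rw [← ha]; simp only [Pi.smul_apply, smul_eq_mul]; ring
              _ = a * 0 := by rw [hdot]
          simp at h1
        have h2le := two_le_rootMult Mc (lam : ℂ) xc v hxcv hli hMx hMvl
        have h2le' : 2 ≤ (charC A).rootMultiplicity (lam : ℂ) := h2le
        rw [hsimple] at h2le'
        omega
      · have habs : ‖(lam : ℂ) * ν‖ < lam := by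
          refine hdom _ ?_ hμ
          exact (isRoot_charpoly_iff Mc _).mpr ⟨v, hv0, hMv'⟩
        have hsplit : ‖(lam : ℂ)‖ * ‖ν‖ < lam := by
          rw [← norm_mul]; exact habs
        rw [Complex.norm_real, Real.norm_eq_abs, abs_of_pos hpos] at hsplit
        exact (mul_lt_iff_lt_one_right hpos).mp hsplit
  have hmap : ∀ k : ℕ, Mc ^ k = (A ^ k).map Complex.ofReal := by
    intro k
    induction k with
    | zero =>
      ext i j
      simp [Matrix.map_apply, Matrix.one_apply, apply_ite (Complex.ofReal)]
    | succ k ih =>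
      ext i j
      rw [pow_succ, pow_succ, Matrix.mul_apply]
      simp only [ih, Matrix.map_apply, Matrix.mul_apply, hMc]
      push_cast
      simp only [← hMc, ih, Matrix.map_apply]
  refine tendsto_pi_nhds.mpr fun i => tendsto_pi_nhds.mpr fun j => ?_
  have hcomplex : Tendsto (fun k : ℕ => ((lam : ℂ) ^ k)⁻¹ * (Mc ^ k) i j) atTop
      (nhds (Pc i j)) := by
    have h1 : Tendsto (fun k : ℕ => (Bc ^ k) i j + Pc i j) atTop (nhds (0 + Pc i j)) :=
      (entry_pow_tendsto_zero Bc hroots i j).add tendsto_const_nhds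
    rw [zero_add] at h1
    refine Tendsto.congr' ?_ h1
    filter_upwards [eventually_ge_atTop 1] with k hk
    obtain ⟨m, rfl⟩ : ∃ m, k = m + 1 := ⟨k - 1, by omega⟩
    have h2 := congrFun (congrFun (hmat m) i) j
    simp only [Matrix.smul_apply, Matrix.add_apply, smul_eq_mul] at h2
    exact h2.symm
  have hentry : ∀ k : ℕ, ((lam ^ k)⁻¹ • A ^ k) i j = (((lam : ℂ) ^ k)⁻¹ * (Mc ^ k) i j).re := by
    intro k
    rw [hmap k]
    simp only [Matrix.smul_apply, Matrix.map_apply, smul_eq_mul]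
    rw [show ((lam : ℂ) ^ k)⁻¹ * ((A ^ k) i j : ℂ) = (((lam ^ k)⁻¹ * (A ^ k) i j : ℝ) : ℂ) by
      push_cast; ring]
    rw [Complex.ofReal_re]
  have hfinal := (Complex.continuous_re.tendsto (Pc i j)).comp hcomplex
  have hval : (Pc i j).re = Matrix.of (fun i j => x i * xs j) i j := by
    simp only [hPc, Matrix.of_apply, hxc, hxsc]
    rw [← Complex.ofReal_mul, Complex.ofReal_re]
  rw [← hval]
  exact Tendsto.congr (fun k => (hentry k).symm) hfinal
end

section
/- A real n×n matrix A is eventually strictly J-sign-symmetric (i.e., there exists k₀ such that A^k is strictly J-sign-symmetric for all k ≥ k₀) if and only if A = D Ã D⁻¹ where Ã is an eventually positive matrix and D is a nonsingular diagonal matrix. -/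
open Matrix Polynomial Filter

variable {n : ℕ}

noncomputable def eps (J : Finset (Fin n)) (i : Fin n) : ℝ := if i ∈ J then 1 else -1

lemma eps_sq (J : Finset (Fin n)) (i : Fin n) : eps J i * eps J i = 1 := by
  unfold eps; split <;> norm_num

lemma eps_cases (J : Finset (Fin n)) (i : Fin n) : eps J i = 1 ∨ eps J i = -1 := by
  unfold eps; split <;> simp

lemma eps_ne_zero (J : Finset (Fin n)) (i : Fin n) : eps J i ≠ 0 := by
  rcases eps_cases J i with h | h <;> rw [h] <;> norm_num

lemma eps_inv (J : Finset (Fin n)) (i : Fin n) : (eps J i)⁻¹ = eps J i := by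
  rcases eps_cases J i with h | h <;> rw [h] <;> norm_num

lemma sjs_iff (J : Finset (Fin n)) (M : Matrix (Fin n) (Fin n) ℝ) :
    SJSWith J M ↔ ∀ i j, 0 < eps J i * M i j * eps J j := by
  constructor
  · intro h i j
    obtain ⟨h1, h2⟩ := h i j
    by_cases hi : i ∈ J <;> by_cases hj : j ∈ J <;>
      simp only [eps, hi, hj, if_true, if_false, one_mul, mul_one, neg_mul, mul_neg,
        neg_neg, neg_pos]
    · exact h1 (by tauto)
    · exact h2 (by tauto)
    · exact h2 (by tauto)
    · exact h1 (by tauto)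
  · intro h i j
    have := h i j
    constructor <;> intro hij <;>
      by_cases hi : i ∈ J <;> by_cases hj : j ∈ J <;>
        simp only [eps, hi, hj, if_true, if_false, one_mul, mul_one, neg_mul, mul_neg,
          neg_neg, neg_pos] at this <;> first | linarith | tauto

lemma sjs_mul (hn : 0 < n) (J : Finset (Fin n)) (M N : Matrix (Fin n) (Fin n) ℝ)
    (hM : SJSWith J M) (hN : SJSWith J N) : SJSWith J (M * N) := by
  rw [sjs_iff] at hM hN ⊢
  intro i j
  have key : eps J i * (M * N) i j * eps J j
      = ∑ l, (eps J i * M i l * eps J l) * (eps J l * N l j * eps J j) := by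
    rw [Matrix.mul_apply, Finset.mul_sum, Finset.sum_mul]
    refine Finset.sum_congr rfl fun l _ => ?_
    linear_combination (-(eps J i * M i l * N l j * eps J j)) * eps_sq J l
  rw [key]
  apply Finset.sum_pos
  · intro l _; exact mul_pos (hM i l) (hN l j)
  · exact ⟨⟨0, hn⟩, Finset.mem_univ _⟩

lemma sjs_pow (hn : 0 < n) (J : Finset (Fin n)) (M : Matrix (Fin n) (Fin n) ℝ)
    (hM : SJSWith J M) : ∀ p, 1 ≤ p → SJSWith J (M ^ p) := by
  intro p hp
  induction p with
  | zero => omega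
  | succ p ih =>
    rcases Nat.eq_zero_or_pos p with h | h
    · subst h; simpa using hM
    · rw [pow_succ]; exact sjs_mul hn J _ _ (ih h) hM

lemma sjs_unique (J J' : Finset (Fin n)) (M N : Matrix (Fin n) (Fin n) ℝ)
    (hM : SJSWith J M) (hM' : SJSWith J' M) (hN : SJSWith J' N) : SJSWith J N := by
  rw [sjs_iff] at hM hM' hN ⊢
  intro i j
  have h1 := hM i j; have h2 := hM' i j; have h3 := hN i j
  rcases eps_cases J i with ha | ha <;> rcases eps_cases J j with hb | hb <;>
    rcases eps_cases J' i with hc | hc <;> rcases eps_cases J' j with hd | hd <;>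
      rw [ha, hb] at h1 ⊢ <;> rw [hc, hd] at h2 h3 <;> nlinarith

lemma myConjPow (D E B : Matrix (Fin n) (Fin n) ℝ) (hDE : D * E = 1) (hED : E * D = 1)
    (k : ℕ) : (D * B * E) ^ k = D * B ^ k * E := by
  induction k with
  | zero => simp [hDE]
  | succ k ih =>
    calc (D * B * E) ^ (k + 1) = (D * B ^ k * E) * (D * B * E) := by rw [pow_succ, ih]
    _ = D * (B ^ k * ((E * D) * (B * E))) := by simp only [Matrix.mul_assoc]
    _ = D * B ^ (k + 1) * E := by rw [hED, one_mul, pow_succ]; simp only [Matrix.mul_assoc]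

/-- `A` is eventually strictly J-sign-symmetric iff it is diagonally
similar to an eventually positive matrix. -/
theorem stmt1 (A : Matrix (Fin n) (Fin n) ℝ) :
    ESJS A ↔ ∃ (d : Fin n → ℝ) (B : Matrix (Fin n) (Fin n) ℝ),
      (∀ i, d i ≠ 0) ∧ EvPos B ∧
        A = diagonal d * B * diagonal (fun i => (d i)⁻¹) := by
  constructor
  · intro h
    rcases Nat.eq_zero_or_pos n with hn | hn
    · subst hn
      refine ⟨fun _ => 1, A, fun i => one_ne_zero, ⟨0, fun k _ i j => i.elim0⟩, ?_⟩
      ext i j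
      exact i.elim0
    obtain ⟨k0, hk⟩ := h
    set k1 := k0 + 1 with hk1
    obtain ⟨J, hJ⟩ := hk k1 (by omega)
    have key : ∀ k, k1 ≤ k → SJSWith J (A ^ k) := by
      intro k hkk
      obtain ⟨J', hJ'⟩ := hk k (by omega)
      have h1 : SJSWith J (A ^ (k1 * (2 * k))) := by
        rw [pow_mul]; exact sjs_pow hn J _ hJ (2 * k) (by omega)
      have h2 : SJSWith J' (A ^ (k1 * (2 * k))) := by
        rw [show k1 * (2 * k) = k * (2 * k1) by ring, pow_mul]
        exact sjs_pow hn J' _ hJ' (2 * k1) (by omega)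
      exact sjs_unique J J' _ _ h1 h2 hJ'
    set D := diagonal (eps J) with hD
    have hDD : D * D = 1 := by
      rw [hD, diagonal_mul_diagonal]
      have : (fun i => eps J i * eps J i) = fun _ => (1 : ℝ) := funext fun i => eps_sq J i
      rw [this, diagonal_one]
    refine ⟨eps J, D * A * D, eps_ne_zero J, ⟨k1, ?_⟩, ?_⟩
    · intro k hkk i j
      have hpow : (D * A * D) ^ k = D * A ^ k * D := myConjPow D D A hDD hDD k
      rw [hpow, hD, Matrix.mul_diagonal, Matrix.diagonal_mul]
      exact (sjs_iff J (A ^ k)).1 (key k hkk) i j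
    · have hinv : (fun i => (eps J i)⁻¹) = eps J := funext fun i => eps_inv J i
      rw [hinv]
      calc A = 1 * A * 1 := by simp
      _ = (D * D) * A * (D * D) := by rw [hDD]
      _ = D * (D * A * D) * D := by simp only [Matrix.mul_assoc]
  · rintro ⟨d, B, hd, ⟨k0, hB⟩, rfl⟩
    classical
    refine ⟨k0, fun k hkk => ⟨Finset.univ.filter (fun i => 0 < d i), ?_⟩⟩
    have hDE : diagonal d * diagonal (fun i => (d i)⁻¹) = 1 := by
      rw [diagonal_mul_diagonal]
      have : (fun i => d i * (d i)⁻¹) = fun _ => (1 : ℝ) :=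
        funext fun i => mul_inv_cancel₀ (hd i)
      rw [this, diagonal_one]
    have hED : diagonal (fun i => (d i)⁻¹) * diagonal d = 1 := by
      rw [diagonal_mul_diagonal]
      have : (fun i => (d i)⁻¹ * d i) = fun _ => (1 : ℝ) :=
        funext fun i => inv_mul_cancel₀ (hd i)
      rw [this, diagonal_one]
    rw [sjs_iff]
    intro i j
    rw [myConjPow _ _ _ hDE hED, Matrix.mul_diagonal, Matrix.diagonal_mul]
    have hb : 0 < (B ^ k) i j := hB k hkk i j
    have hi := (hd i).lt_or_gt
    have hj := (hd j).lt_or_gt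
    unfold eps
    by_cases h1 : 0 < d i <;> by_cases h2 : 0 < d j <;>
      simp only [Finset.mem_filter, Finset.mem_univ, true_and, h1, h2, if_true, if_false,
        one_mul, mul_one, neg_mul, mul_neg, neg_neg, neg_pos]
    · exact mul_pos (mul_pos h1 hb) (inv_pos.2 h2)
    · have h2' : d j < 0 := hj.resolve_right h2
      exact mul_neg_of_pos_of_neg (mul_pos h1 hb) (inv_lt_zero.2 h2')
    · have h1' : d i < 0 := hi.resolve_right h1
      exact mul_neg_of_neg_of_pos (mul_neg_of_neg_of_pos h1' hb) (inv_pos.2 h2)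
    · have h1' : d i < 0 := hi.resolve_right h1
      have h2' : d j < 0 := hj.resolve_right h2
      exact mul_pos_of_neg_of_neg (mul_neg_of_neg_of_pos h1' hb) (inv_lt_zero.2 h2')
end

section
/- A real n×n matrix M is strictly J-sign-symmetric for some subset J ⊆ {1,…,n} if and only if M = D P D⁻¹ for some entrywise positive matrix P and some nonsingular diagonal matrix D. -/
open Matrix Polynomial Filter

variable {n : ℕ}

/-- `M` is strictly J-sign-symmetric iff `M = D P D⁻¹` with `P` positive
and `D` a nonsingular diagonal matrix. -/
theorem stmt2 (M : Matrix (Fin n) (Fin n) ℝ) :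
    SJS M ↔ ∃ (d : Fin n → ℝ) (P : Matrix (Fin n) (Fin n) ℝ),
      (∀ i, d i ≠ 0) ∧ (∀ i j, 0 < P i j) ∧
        M = diagonal d * P * diagonal (fun i => (d i)⁻¹) := by
  constructor
  · rintro ⟨J, hJ⟩
    refine ⟨fun i => if i ∈ J then 1 else -1,
      Matrix.of fun i j => (if i ∈ J then (1:ℝ) else -1) * M i j *
        (if j ∈ J then (1:ℝ) else -1), ?_, ?_, ?_⟩
    · intro i; by_cases h : i ∈ J <;> simp [h]
    · intro i j
      by_cases hi : i ∈ J <;> by_cases hj' : j ∈ J <;>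
        simp only [Matrix.of_apply, hi, hj', if_true, if_false] <;>
        [ (have := (hJ i j).1 (by tauto); linarith);
          (have := (hJ i j).2 (by tauto); nlinarith);
          (have := (hJ i j).2 (by tauto); nlinarith);
          (have := (hJ i j).1 (by tauto); linarith) ]
    · ext i j
      rw [Matrix.mul_diagonal, Matrix.diagonal_mul]
      simp only [Matrix.of_apply]
      by_cases hi : i ∈ J <;> by_cases hj' : j ∈ J <;> simp [hi, hj'] <;> ring
  · rintro ⟨d, P, hd, hP, rfl⟩
    refine ⟨Finset.univ.filter (fun i => 0 < d i), fun i j => ?_⟩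
    have hij : (Matrix.diagonal d * P * Matrix.diagonal fun i => (d i)⁻¹) i j
        = d i * P i j * (d j)⁻¹ := by
      rw [Matrix.mul_diagonal, Matrix.diagonal_mul]
    rw [hij]
    have hi := hd i; have hj := hd j
    simp only [Finset.mem_filter, Finset.mem_univ, true_and]
    constructor
    · intro h
      rcases lt_or_gt_of_ne hi with h1 | h1 <;> rcases lt_or_gt_of_ne hj with h2 | h2
      · have : (d j)⁻¹ < 0 := inv_neg''.2 h2
        exact mul_pos_of_neg_of_neg (mul_neg_of_neg_of_pos h1 (hP i j)) this
      · exact absurd (h.2 h2) (not_lt.2 h1.le)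
      · exact absurd (h.1 h1) (not_lt.2 h2.le)
      · have : 0 < (d j)⁻¹ := inv_pos.2 h2
        exact mul_pos (mul_pos h1 (hP i j)) this
    · intro h
      rcases lt_or_gt_of_ne hi with h1 | h1 <;> rcases lt_or_gt_of_ne hj with h2 | h2
      · exact absurd (⟨fun h' => absurd h' (not_lt.2 h1.le),
          fun h' => absurd h' (not_lt.2 h2.le)⟩) h
      · have : 0 < (d j)⁻¹ := inv_pos.2 h2
        exact mul_neg_of_neg_of_pos (mul_neg_of_neg_of_pos h1 (hP i j)) this
      · have : (d j)⁻¹ < 0 := inv_neg''.2 h2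
        exact mul_neg_of_pos_of_neg (mul_pos h1 (hP i j)) this
      · exact absurd ⟨fun _ => h2, fun _ => h1⟩ h
end

section
/- If a real n×n matrix A has the signature equality property, then A is eventually strictly J-sign-symmetric: there exists k₀ such that A^k is strictly J-sign-symmetric for all k ≥ k₀ (with J = {i : x^i > 0} where x is the dominant eigenvector). -/
open Matrix Polynomial Filter

variable {n : ℕ}

section AuxSJS
open Topology

lemma myEvalCharpoly {m : Type*} [Fintype m] [DecidableEq m] {R : Type*} [CommRing R]
    (M : Matrix m m R) (t : R) : M.charpoly.eval t = (t • (1 : Matrix m m R) - M).det := by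
  rw [Matrix.charpoly, ← Polynomial.coe_evalRingHom, RingHom.map_det]
  congr 1
  ext i j
  by_cases h : i = j <;>
    simp [h, charmatrix_apply, Matrix.one_apply, Matrix.smul_apply]


attribute [local instance] Matrix.frobeniusSeminormedAddCommGroup
  Matrix.frobeniusNormedAddCommGroup Matrix.frobeniusNormedSpace
  Matrix.frobeniusNormedRing Matrix.frobeniusNormedAlgebra

lemma myEntryLe {m : Type*} [Fintype m] (A : Matrix m m ℂ) (i j : m) : ‖A i j‖ ≤ ‖A‖ := by
  have h : ‖A i j‖₊ ≤ ‖A‖₊ := by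
    rw [Matrix.frobenius_nnnorm_def]
    have h1 : ‖A i j‖₊ ^ (2:ℝ) ≤ ∑ i', ∑ j', ‖A i' j'‖₊ ^ (2:ℝ) := by
      calc ‖A i j‖₊ ^ (2:ℝ) ≤ ∑ j', ‖A i j'‖₊ ^ (2:ℝ) :=
            Finset.single_le_sum (f := fun j' => ‖A i j'‖₊ ^ (2:ℝ))
              (fun _ _ => zero_le) (Finset.mem_univ j)
        _ ≤ ∑ i', ∑ j', ‖A i' j'‖₊ ^ (2:ℝ) :=
            Finset.single_le_sum (f := fun i' => ∑ j', ‖A i' j'‖₊ ^ (2:ℝ))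
              (fun _ _ => zero_le) (Finset.mem_univ i)
    calc ‖A i j‖₊ = (‖A i j‖₊ ^ (2:ℝ)) ^ (1/2:ℝ) := by
          rw [← NNReal.rpow_mul]; norm_num
      _ ≤ _ := NNReal.rpow_le_rpow h1 (by norm_num)
  exact h


lemma charpolyIdentity {n : ℕ} (Ac Nc : Matrix (Fin n) (Fin n) ℂ) (lam : ℂ)
    (u v : Fin n → ℂ)
    (hN : Nc = Ac - Matrix.of (fun i j => u i * v j))
    (hu : Ac *ᵥ u = lam • u)
    (hdot : v ⬝ᵥ u = lam) :
    (X - C lam) * Nc.charpoly = X * Ac.charpoly := by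
  apply Polynomial.eq_of_infinite_eval_eq
  have hfin : Set.Finite ({t : ℂ | Ac.charpoly.IsRoot t} ∪ {lam}) :=
    (Polynomial.finite_setOf_isRoot Ac.charpoly_monic.ne_zero).union (Set.finite_singleton _)
  apply Set.Infinite.mono (s := ({t : ℂ | Ac.charpoly.IsRoot t} ∪ {lam})ᶜ)
  swap
  · exact Set.Finite.infinite_compl hfin
  intro t ht
  simp only [Set.mem_compl_iff, Set.mem_union, Set.mem_setOf_eq, Set.mem_singleton_iff,
    not_or] at ht
  obtain ⟨hroot, htlam⟩ := ht
  have htlam' : t - lam ≠ 0 := sub_ne_zero.2 htlam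
  set B : Matrix (Fin n) (Fin n) ℂ := t • 1 - Ac with hB
  have hdetB : B.det ≠ 0 := by
    rw [← myEvalCharpoly]; exact hroot
  have hBunit : IsUnit B.det := isUnit_iff_ne_zero.2 hdetB
  have hBu : B *ᵥ u = (t - lam) • u := by
    rw [hB, Matrix.sub_mulVec, Matrix.smul_mulVec, Matrix.one_mulVec, hu, sub_smul]
  have hBinvu : B⁻¹ *ᵥ u = (t - lam)⁻¹ • u := by
    have h1 : B⁻¹ *ᵥ (B *ᵥ u) = u := by
      rw [Matrix.mulVec_mulVec, Matrix.nonsing_inv_mul _ hBunit, Matrix.one_mulVec]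
    rw [hBu, Matrix.mulVec_smul] at h1
    exact ((inv_smul_eq_iff₀ htlam').2 h1.symm).symm
  have key : t • (1 : Matrix (Fin n) (Fin n) ℂ) - Nc = B + replicateCol Unit u * replicateRow Unit v := by
    rw [hN, hB]
    ext i j
    simp [Matrix.mul_apply, Matrix.sub_apply, Matrix.add_apply, Matrix.replicateCol, Matrix.replicateRow]
    ring
  have hdetN : (t • (1 : Matrix (Fin n) (Fin n) ℂ) - Nc).det
      = B.det * (1 + (t - lam)⁻¹ * lam) := by
    rw [key, Matrix.det_add_replicateCol_mul_replicateRow hBunit]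
    congr 1
    rw [Matrix.det_unique]
    have : (replicateRow Unit v * B⁻¹ * replicateCol Unit u) default default = v ⬝ᵥ (B⁻¹ *ᵥ u) := by
      simp [Matrix.mul_apply, Matrix.replicateRow, Matrix.replicateCol, dotProduct, Matrix.mulVec,
        Finset.mul_sum, Finset.sum_mul]
      rw [Finset.sum_comm]
      congr 1; ext k; congr 1; ext l; ring
    rw [Matrix.add_apply, this, hBinvu, Matrix.one_apply_eq]
    rw [dotProduct_smul, hdot]
    simp [smul_eq_mul]
  simp only [Set.mem_setOf_eq, eval_mul, eval_sub, eval_X, eval_C]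
  rw [myEvalCharpoly, myEvalCharpoly, hdetN]
  field_simp
  ring

lemma entriesPowSmall {n : ℕ} (N : Matrix (Fin n) (Fin n) ℝ) (lam : ℝ) (hpos : 0 < lam)
    (hroots : ∀ μ : ℂ, ((N.map Complex.ofReal).charpoly).IsRoot μ → ‖μ‖ < lam)
    {δ : ℝ} (hδ : 0 < δ) :
    ∀ᶠ k in atTop, ∀ i j, |(N ^ k) i j| < δ * lam ^ k := by
  set Nc : Matrix (Fin n) (Fin n) ℂ := N.map Complex.ofReal with hNc
  have hchar : Nc.charpoly ≠ 0 := Nc.charpoly_monic.ne_zero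
  set r : NNReal := (Nc.charpoly.roots.toFinset.sup fun μ => ‖μ‖₊) with hr
  have hrlam : r < lam.toNNReal := by
    rw [hr, Finset.sup_lt_iff (by simpa using hpos : (⊥ : NNReal) < lam.toNNReal)]
    intro μ hμ
    rw [Multiset.mem_toFinset, mem_roots hchar] at hμ
    have := hroots μ hμ
    rw [← NNReal.coe_lt_coe, coe_nnnorm, Real.coe_toNNReal _ hpos.le]
    simpa using this
  have hspec : spectralRadius ℂ Nc ≤ (r : ENNReal) := by
    apply iSup₂_le
    intro μ hμ
    rw [ENNReal.coe_le_coe]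
    apply Finset.le_sup
    rw [Multiset.mem_toFinset, mem_roots hchar]
    rw [spectrum.mem_iff] at hμ
    by_contra hroot
    apply hμ
    rw [Algebra.algebraMap_eq_smul_one]
    exact (Matrix.isUnit_iff_isUnit_det _).2 (isUnit_iff_ne_zero.2 (by
        rw [← myEvalCharpoly]; exact hroot))
  haveI : CompleteSpace (Matrix (Fin n) (Fin n) ℂ) := FiniteDimensional.complete ℂ _
  have hrlam' : (r:ℝ) < lam := by
    rw [← Real.coe_toNNReal _ hpos.le]; exact_mod_cast hrlam
  set ρ : ℝ := ((r:ℝ) + lam)/2 with hρ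
  have hρ0 : 0 ≤ ρ := by positivity
  have hρlam : ρ < lam := by rw [hρ]; linarith
  have hrρ : r < ρ.toNNReal := by
    rw [← NNReal.coe_lt_coe, Real.coe_toNNReal _ hρ0, hρ]; linarith
  have hlt : spectralRadius ℂ Nc < (ρ.toNNReal : ENNReal) :=
    lt_of_le_of_lt hspec (by exact_mod_cast hrρ)
  have T := spectrum.pow_nnnorm_pow_one_div_tendsto_nhds_spectralRadius Nc
  have hev1 : ∀ᶠ k : ℕ in atTop, (‖Nc ^ k‖₊ : ENNReal) ^ (1/(k:ℝ)) < (ρ.toNNReal : ENNReal) :=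
    T.eventually_lt_const hlt
  have hev2 : ∀ᶠ k : ℕ in atTop, ∀ i j, ‖(Nc ^ k) i j‖ < ρ ^ k := by
    filter_upwards [hev1, eventually_ge_atTop 1] with k hk hk1 i j
    have hk0 : (0:ℝ) < k := by exact_mod_cast hk1
    have h2 : (‖Nc ^ k‖₊ : ENNReal) < (ρ.toNNReal : ENNReal) ^ (k:ℕ) := by
      have h := ENNReal.rpow_lt_rpow hk hk0
      rwa [← ENNReal.rpow_mul, one_div,
        inv_mul_cancel₀ (ne_of_gt hk0), ENNReal.rpow_one,
        ENNReal.rpow_natCast] at h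
    have h3 : ‖Nc ^ k‖ < ρ ^ k := by
      rw [← ENNReal.coe_pow, ENNReal.coe_lt_coe] at h2
      have h4 : ‖Nc ^ k‖ < ((ρ.toNNReal ^ k : NNReal) : ℝ) := by exact_mod_cast h2
      rwa [NNReal.coe_pow, Real.coe_toNNReal _ hρ0] at h4
    exact lt_of_le_of_lt (myEntryLe _ i j) h3
  have hev3 : ∀ᶠ k : ℕ in atTop, ρ ^ k < δ * lam ^ k := by
    have hfrac : ρ / lam < 1 := (div_lt_one hpos).2 hρlam
    have hfrac0 : 0 ≤ ρ / lam := by positivity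
    have T2 : Tendsto (fun k : ℕ => (ρ/lam) ^ k) atTop (𝓝 0) :=
      tendsto_pow_atTop_nhds_zero_of_lt_one hfrac0 hfrac
    filter_upwards [T2.eventually_lt_const hδ] with k hk
    have hlamk : (0:ℝ) < lam ^ k := pow_pos hpos k
    have h := mul_lt_mul_of_pos_right hk hlamk
    rwa [div_pow, div_mul_cancel₀ _ (ne_of_gt hlamk)] at h
  have hmp : ∀ k : ℕ, (N ^ k).map Complex.ofReal = Nc ^ k := by
    intro k
    have h : (Complex.ofRealHom.mapMatrix (N ^ k) : Matrix (Fin n) (Fin n) ℂ)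
        = (Complex.ofRealHom.mapMatrix N) ^ k := map_pow _ _ _
    simp only [RingHom.mapMatrix_apply, hNc] at h
    exact h
  filter_upwards [hev2, hev3] with k h2 h3 i j
  have habs : |(N ^ k) i j| = ‖(Nc ^ k) i j‖ := by
    rw [← hmp]
    simp [Matrix.map_apply, Complex.norm_real, Real.norm_eq_abs]
  rw [habs]; exact lt_trans (h2 i j) h3


end AuxSJS

/-- signature equality property implies eventual strict
J-sign-symmetry, with `J = {i : xⁱ > 0}`. -/
theorem stmt3 (A : Matrix (Fin n) (Fin n) ℝ) (lam : ℝ) (x xs : Fin n → ℝ)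
    (hpos : 0 < lam)
    (hroot : (charC A).IsRoot (lam : ℂ))
    (hsimple : (charC A).rootMultiplicity (lam : ℂ) = 1)
    (hdom : ∀ μ : ℂ, (charC A).IsRoot μ → μ ≠ (lam : ℂ) → ‖μ‖ < lam)
    (hx : A *ᵥ x = lam • x) (hxs : Aᵀ *ᵥ xs = lam • xs)
    (hnz : ∀ i, x i ≠ 0 ∧ xs i ≠ 0)
    (hsign : ∀ i, 0 < x i * xs i) :
    ∃ k0 : ℕ, ∀ k ≥ k0,
      SJSWith (Finset.univ.filter fun i => 0 < x i) (A ^ k) := by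
  classical
  rcases isEmpty_or_nonempty (Fin n) with hE | hNE
  · exact ⟨0, fun k _ i j => (IsEmpty.false i).elim⟩
  set c : ℝ := ∑ i, x i * xs i with hcdef
  have hc : 0 < c := Finset.sum_pos (fun i _ => hsign i) Finset.univ_nonempty
  have hcc : (c : ℂ) ≠ 0 := by exact_mod_cast ne_of_gt hc
  set P : Matrix (Fin n) (Fin n) ℝ := Matrix.of (fun i j => x i * xs j / c) with hPdef
  have hAx : ∀ i, ∑ k, A i k * x k = lam * x i := by
    intro i
    have h := congrFun hx i
    simpa [Matrix.mulVec, dotProduct] using h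
  have hxsA : ∀ j, ∑ k, A k j * xs k = lam * xs j := by
    intro j
    have h := congrFun hxs j
    simpa [Matrix.mulVec, dotProduct, Matrix.transpose_apply] using h
  have hAP : A * P = lam • P := by
    ext i j
    simp only [Matrix.mul_apply, hPdef, Matrix.of_apply, Matrix.smul_apply, smul_eq_mul]
    calc ∑ k, A i k * (x k * xs j / c) = (∑ k, A i k * x k) * (xs j / c) := by
          rw [Finset.sum_mul]; exact Finset.sum_congr rfl fun k _ => by ring
      _ = lam * (x i * xs j / c) := by rw [hAx i]; ring
  have hPA : P * A = lam • P := by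
    ext i j
    simp only [Matrix.mul_apply, hPdef, Matrix.of_apply, Matrix.smul_apply, smul_eq_mul]
    calc ∑ k, x i * xs k / c * A k j = (∑ k, A k j * xs k) * (x i / c) := by
          rw [Finset.sum_mul]; exact Finset.sum_congr rfl fun k _ => by ring
      _ = lam * (x i * xs j / c) := by rw [hxsA j]; ring
  have hPP : P * P = P := by
    ext i j
    simp only [Matrix.mul_apply, hPdef, Matrix.of_apply]
    calc ∑ k, x i * xs k / c * (x k * xs j / c)
        = (∑ k, x k * xs k) * (x i * xs j / (c * c)) := by
          rw [Finset.sum_mul]; exact Finset.sum_congr rfl fun k _ => by ring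
      _ = x i * xs j / c := by
          rw [← hcdef]; field_simp
  set N : Matrix (Fin n) (Fin n) ℝ := A - lam • P with hNdef
  have hNP : N * P = 0 := by
    rw [hNdef, Matrix.sub_mul, hAP, Matrix.smul_mul, hPP, sub_self]
  have hPN : P * N = 0 := by
    rw [hNdef, Matrix.mul_sub, hPA, Matrix.mul_smul, hPP, sub_self]
  have hNmP : ∀ m : ℕ, 1 ≤ m → N ^ m * P = 0 := by
    intro m hm
    obtain ⟨m', rfl⟩ := Nat.exists_eq_add_of_le hm
    rw [add_comm, pow_succ, Matrix.mul_assoc, hNP, Matrix.mul_zero]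
  have hA' : A = N + lam • P := by rw [hNdef, sub_add_cancel]
  have hpow : ∀ k : ℕ, 1 ≤ k → A ^ k = N ^ k + (lam ^ k) • P := by
    intro k hk
    induction k with
    | zero => omega
    | succ m ih =>
      rcases Nat.lt_or_ge 1 (m + 1) with h1 | h1
      · have hm : 1 ≤ m := by omega
        rw [pow_succ, ih hm]
        nth_rewrite 1 [hA']
        rw [Matrix.add_mul, Matrix.mul_add, Matrix.mul_add, Matrix.smul_mul, Matrix.smul_mul,
          Matrix.mul_smul, Matrix.mul_smul, hNmP m hm, hPN, hPP, ← pow_succ]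
        simp only [smul_zero, add_zero, zero_add, smul_smul]
        rw [pow_succ]
        ring_nf
      · have : m = 0 := by omega
        subst this
        simp [hA']
  set Ac : Matrix (Fin n) (Fin n) ℂ := A.map Complex.ofReal with hAcdef
  set Nc : Matrix (Fin n) (Fin n) ℂ := N.map Complex.ofReal with hNcdef
  have hcharCA : charC A = Ac.charpoly := rfl
  set xsc : Fin n → ℂ := fun i => ((xs i : ℝ) : ℂ) with hxscdef
  set u : Fin n → ℂ := fun i => ((lam / c : ℝ) : ℂ) * ((x i : ℝ) : ℂ) with hudef
  have hNcEq : Nc = Ac - Matrix.of (fun i j => u i * xsc j) := by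
    ext i j
    simp only [hNcdef, hNdef, hAcdef, Matrix.map_apply, Matrix.sub_apply, Matrix.smul_apply,
      hPdef, Matrix.of_apply, smul_eq_mul, hudef, hxscdef]
    push_cast
    ring
  have hAxC : ∀ i, ∑ k, (A i k : ℂ) * ((x k : ℝ) : ℂ) = ((lam : ℝ) : ℂ) * ((x i : ℝ) : ℂ) := by
    intro i
    have h := hAx i
    calc ∑ k, (A i k : ℂ) * ((x k : ℝ) : ℂ) = ((∑ k, A i k * x k : ℝ) : ℂ) := by push_cast; rfl
      _ = _ := by rw [h]; push_cast; rfl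
  have hAcu : Ac *ᵥ u = ((lam : ℝ) : ℂ) • u := by
    ext i
    simp only [Matrix.mulVec, dotProduct, hAcdef, Matrix.map_apply, hudef, Pi.smul_apply,
      smul_eq_mul]
    calc ∑ k, (A i k : ℂ) * (((lam / c : ℝ) : ℂ) * ((x k : ℝ) : ℂ))
        = ((lam / c : ℝ) : ℂ) * ∑ k, (A i k : ℂ) * ((x k : ℝ) : ℂ) := by
          rw [Finset.mul_sum]; exact Finset.sum_congr rfl fun k _ => by ring
      _ = _ := by rw [hAxC i]; ring
  have hdotc : xsc ⬝ᵥ u = ((lam : ℝ) : ℂ) := by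
    simp only [dotProduct, hxscdef, hudef]
    calc ∑ k, ((xs k : ℝ) : ℂ) * (((lam / c : ℝ) : ℂ) * ((x k : ℝ) : ℂ))
        = ((lam / c : ℝ) : ℂ) * ((∑ k, x k * xs k : ℝ) : ℂ) := by
          push_cast
          rw [Finset.mul_sum]
          exact Finset.sum_congr rfl fun k _ => by ring
      _ = _ := by
          rw [← hcdef]
          push_cast
          rw [div_mul_eq_mul_div, mul_div_assoc, div_self hcc, mul_one]
  have identity := charpolyIdentity Ac Nc ((lam : ℝ) : ℂ) u xsc hNcEq hAcu hdotc
  have hcharN0 : Nc.charpoly ≠ 0 := Nc.charpoly_monic.ne_zero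
  have hlamC0 : ((lam : ℝ) : ℂ) ≠ 0 := Complex.ofReal_ne_zero.2 (ne_of_gt hpos)
  have hlamnot : ¬ Nc.charpoly.IsRoot ((lam : ℝ) : ℂ) := by
    intro h
    have h1 := congrArg (Polynomial.rootMultiplicity ((lam : ℝ) : ℂ)) identity
    rw [Polynomial.rootMultiplicity_mul (mul_ne_zero (Polynomial.X_sub_C_ne_zero _) hcharN0),
      Polynomial.rootMultiplicity_mul (mul_ne_zero Polynomial.X_ne_zero
        Ac.charpoly_monic.ne_zero),
      Polynomial.rootMultiplicity_X_sub_C_self,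
      Polynomial.rootMultiplicity_eq_zero (p := (X : Polynomial ℂ))
        (by simpa [Polynomial.IsRoot] using hlamC0),
      ← hcharCA, hsimple] at h1
    have h2 : 0 < Polynomial.rootMultiplicity ((lam : ℝ) : ℂ) Nc.charpoly :=
      (Polynomial.rootMultiplicity_pos hcharN0).2 h
    omega
  have hNroots : ∀ μ : ℂ, Nc.charpoly.IsRoot μ → ‖μ‖ < lam := by
    intro μ hμ
    have hev := congrArg (Polynomial.eval μ) identity
    simp only [Polynomial.eval_mul, Polynomial.eval_sub, Polynomial.eval_X, Polynomial.eval_C,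
      hμ.eq_zero, mul_zero] at hev
    rcases mul_eq_zero.1 hev.symm with h0 | hA0
    · simp [h0, hpos]
    · have hne : μ ≠ ((lam : ℝ) : ℂ) := by
        rintro rfl
        exact hlamnot hμ
      exact hdom μ (by rw [hcharCA]; exact hA0) hne
  have hδex : (Finset.univ : Finset (Fin n × Fin n)).Nonempty := Finset.univ_nonempty
  set δ : ℝ := Finset.univ.inf' hδex (fun p : Fin n × Fin n => |P p.1 p.2|) with hδdef
  have hδpos : 0 < δ := by
    rw [hδdef, Finset.lt_inf'_iff]
    rintro ⟨i, j⟩ -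
    simp only [hPdef, Matrix.of_apply]
    exact abs_pos.2 (div_ne_zero (mul_ne_zero (hnz i).1 (hnz j).2) (ne_of_gt hc))
  have hδle : ∀ i j, δ ≤ |P i j| := fun i j => Finset.inf'_le _ (Finset.mem_univ (i, j))
  have hev := entriesPowSmall N lam hpos (fun μ h => hNroots μ h) hδpos
  obtain ⟨k0, hk0⟩ := eventually_atTop.1 hev
  refine ⟨max k0 1, fun k hk => ?_⟩
  have hk1 : 1 ≤ k := le_trans (le_max_right _ _) hk
  have hkk0 : k0 ≤ k := le_trans (le_max_left _ _) hk
  have hNk := hk0 k hkk0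
  have hAk : ∀ i j, (A ^ k) i j = (N ^ k) i j + lam ^ k * P i j := by
    intro i j
    rw [hpow k hk1]
    simp [Matrix.add_apply, Matrix.smul_apply, smul_eq_mul]
  have hxxs : ∀ l, 0 < x l ↔ 0 < xs l := by
    intro l
    rcases mul_pos_iff.1 (hsign l) with ⟨h1, h2⟩ | ⟨h1, h2⟩
    · exact ⟨fun _ => h2, fun _ => h1⟩
    · exact ⟨fun h => absurd h (not_lt.2 h1.le), fun h => absurd h (not_lt.2 h2.le)⟩
  intro i j
  have hmemi : (i ∈ Finset.univ.filter fun l => 0 < x l) ↔ 0 < x i := by simp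
  have hmemj : (j ∈ Finset.univ.filter fun l => 0 < x l) ↔ 0 < x j := by simp
  have hlamk : (0 : ℝ) < lam ^ k := pow_pos hpos k
  have hNbd := abs_lt.1 (hNk i j)
  constructor
  · intro hiff
    rw [hmemi, hmemj, hxxs j] at hiff
    have hPpos : 0 < P i j := by
      simp only [hPdef, Matrix.of_apply]
      apply div_pos _ hc
      rcases lt_or_gt_of_ne (hnz i).1 with h1 | h1
      · have h2 : ¬ 0 < xs j := fun h => absurd (hiff.2 h) (not_lt.2 h1.le)
        have h3 : xs j < 0 := lt_of_le_of_ne (not_lt.1 h2) (hnz j).2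
        exact mul_pos_of_neg_of_neg h1 h3
      · exact mul_pos h1 (hiff.1 h1)
    have hδP : δ ≤ P i j := by
      have := hδle i j
      rwa [abs_of_pos hPpos] at this
    rw [hAk i j]
    have h2 : δ * lam ^ k ≤ P i j * lam ^ k :=
      mul_le_mul_of_nonneg_right hδP hlamk.le
    nlinarith [hNbd.1, hNbd.2]
  · intro hiff
    rw [hmemi, hmemj, hxxs j] at hiff
    have hPneg : P i j < 0 := by
      simp only [hPdef, Matrix.of_apply]
      apply div_neg_of_neg_of_pos _ hc
      rcases lt_or_gt_of_ne (hnz i).1 with h1 | h1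
      · have h2 : 0 < xs j := by
          by_contra h3
          have h4 : xs j < 0 := lt_of_le_of_ne (not_lt.1 h3) (hnz j).2
          exact hiff ⟨fun h => absurd h (not_lt.2 h1.le),
            fun h => absurd h (not_lt.2 h4.le)⟩
        exact mul_neg_of_neg_of_pos h1 h2
      · have h2 : xs j < 0 := by
          by_contra h3
          have h4 : 0 < xs j := lt_of_le_of_ne (not_lt.1 h3) (Ne.symm (hnz j).2)
          exact hiff ⟨fun _ => h4, fun _ => h1⟩
        exact mul_neg_of_pos_of_neg h1 h2
    have hδP : δ ≤ -P i j := by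
      have := hδle i j
      rwa [abs_of_neg hPneg] at this
    rw [hAk i j]
    have h2 : δ * lam ^ k ≤ -P i j * lam ^ k :=
      mul_le_mul_of_nonneg_right hδP hlamk.le
    nlinarith [hNbd.1, hNbd.2]
end

section
/- Let A be a real n×n matrix whose eigenvalues λ₁,…,λₙ are positive, simple, and pairwise distinct. Suppose for each j = 1,…,n the exterior products x₁∧⋯∧x_j of the eigenvectors (ordered by decreasing eigenvalue) can be chosen strictly positive. Then for every j, the j-th compound matrix A^(j) has the strong Perron–Frobenius property: its spectral radius λ₁⋯λ_j is a positive simple strictly dominant eigenvalue with a strictly positive eigenvector. -/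
open Matrix Polynomial Filter

variable {n : ℕ}

section Aux

open Finset Equiv Equiv.Perm

lemma strictMono_val_le {j : ℕ} {f : Fin j → Fin n} (hf : StrictMono f) (a : Fin j) :
    (a : ℕ) ≤ (f a : ℕ) := by
  induction' h : (a : ℕ) with k ih generalizing a
  · exact Nat.zero_le _
  · have hk : k < j := by omega
    have hlt : (⟨k, hk⟩ : Fin j) < a := by
      simp [Fin.lt_def, h]
    have := ih ⟨k, hk⟩ rfl
    have h2 : f ⟨k, hk⟩ < f a := hf hlt
    have := Fin.lt_def.mp h2
    omega

lemma image_orderEmbOfFin {j : ℕ} (s : Finset (Fin n)) (hs : s.card = j) :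
    Finset.image (s.orderEmbOfFin hs) Finset.univ = s := by
  ext i
  simp only [Finset.mem_image, Finset.mem_univ, true_and]
  constructor
  · rintro ⟨a, rfl⟩; exact Finset.orderEmbOfFin_mem s hs a
  · intro hi
    refine ⟨(s.orderIsoOfFin hs).symm ⟨i, hi⟩, ?_⟩
    have := (s.orderIsoOfFin hs).apply_symm_apply ⟨i, hi⟩
    exact congrArg Subtype.val this

lemma orderEmbOfFin_congr {j : ℕ} {s t : Finset (Fin n)} (hst : s = t)
    (hs : s.card = j) (ht : t.card = j) (a : Fin j) :
    s.orderEmbOfFin hs a = t.orderEmbOfFin ht a := by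
  subst hst; rfl

/-- Cauchy–Binet. -/
lemma cauchyBinet {j : ℕ} (M : Matrix (Fin j) (Fin n) ℝ) (N : Matrix (Fin n) (Fin j) ℝ) :
    (M * N).det = ∑ s : {s : Finset (Fin n) // s.card = j},
      (M.submatrix id (s.1.orderEmbOfFin s.2)).det * (N.submatrix (s.1.orderEmbOfFin s.2) id).det := by
  classical
  have step1 : (M * N).det
      = ∑ p : Fin j → Fin n, (∏ i, N (p i) i) * (M.submatrix id p).det := by
    have : (M * N).det
        = ∑ p : Fin j → Fin n, ∑ σ : Perm (Fin j), ((Equiv.Perm.sign σ : ℤ) : ℝ) *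
            ∏ i, M (σ i) (p i) * N (p i) i := by
      simp only [det_apply', Matrix.mul_apply, Finset.prod_univ_sum, Finset.mul_sum,
        Fintype.piFinset_univ]
      rw [Finset.sum_comm]
    rw [this]
    refine Finset.sum_congr rfl fun p _ => ?_
    rw [det_apply', Finset.mul_sum]
    refine Finset.sum_congr rfl fun σ _ => ?_
    simp only [submatrix_apply, id_eq, Finset.prod_mul_distrib]
    ring
  rw [step1]
  -- kill non-injective terms
  rw [← Finset.sum_filter_add_sum_filter_not Finset.univ (fun p => Function.Injective p)]
  have hzero : ∑ p ∈ Finset.univ.filter (fun p => ¬ Function.Injective p),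
      (∏ i, N (p i) i) * (M.submatrix id p).det = 0 := by
    refine Finset.sum_eq_zero fun p hp => ?_
    have hp := (Finset.mem_filter.mp hp).2; simp only [Function.Injective] at hp
    push_neg at hp
    obtain ⟨a, b, hab, hne⟩ := hp
    have : (M.submatrix id p).det = 0 := by
      refine det_zero_of_column_eq hne fun k => ?_
      simp [submatrix_apply, hab]
    rw [this, mul_zero]
  rw [hzero, add_zero]
  -- bijection between injective maps and (subset, permutation) pairs
  have hbij : ∑ p ∈ Finset.univ.filter (fun p : Fin j → Fin n => Function.Injective p),
      (∏ i, N (p i) i) * (M.submatrix id p).det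
      = ∑ q : {s : Finset (Fin n) // s.card = j} × Perm (Fin j),
        (∏ i, N ((q.1.1.orderEmbOfFin q.1.2) (q.2 i)) i) *
          (M.submatrix id ((q.1.1.orderEmbOfFin q.1.2) ∘ q.2)).det := by
    refine (Finset.sum_bij (fun q _ => (q.1.1.orderEmbOfFin q.1.2) ∘ q.2) ?_ ?_ ?_ ?_).symm
    · intro q _
      simp only [Finset.mem_filter, Finset.mem_univ, true_and]
      exact (q.1.1.orderEmbOfFin q.1.2).injective.comp q.2.injective
    · rintro ⟨s, σ⟩ _ ⟨t, τ⟩ _ hfg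
      have hfg' : (s.1.orderEmbOfFin s.2) ∘ σ = (t.1.orderEmbOfFin t.2) ∘ τ := hfg
      have himg : ∀ (u : {s : Finset (Fin n) // s.card = j}) (ρ : Perm (Fin j)),
          Finset.image ((u.1.orderEmbOfFin u.2) ∘ ρ) Finset.univ = u.1 := by
        intro u ρ
        rw [← Finset.image_image, Finset.image_univ_equiv, image_orderEmbOfFin]
      have hst : s = t := by
        refine Subtype.ext ?_
        rw [← himg s σ, ← himg t τ, hfg']
      subst hst
      have hστ : σ = τ := by
        refine Equiv.ext fun a => (s.1.orderEmbOfFin s.2).injective ?_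
        exact congrFun hfg a
      rw [hστ]
    · intro p hp
      simp only [Finset.mem_filter, Finset.mem_univ, true_and] at hp
      set s : Finset (Fin n) := Finset.image p Finset.univ with hs
      have hsc : s.card = j := by
        rw [hs, Finset.card_image_of_injective _ hp, Finset.card_univ, Fintype.card_fin]
      have hmem : ∀ i, p i ∈ s := fun i => Finset.mem_image_of_mem p (Finset.mem_univ i)
      set g : Fin j → Fin j := fun i => (s.orderIsoOfFin hsc).symm ⟨p i, hmem i⟩ with hg
      have hgp : ∀ i, ((s.orderIsoOfFin hsc) (g i) : Fin n) = p i := fun i =>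
        congrArg Subtype.val ((s.orderIsoOfFin hsc).apply_symm_apply ⟨p i, hmem i⟩)
      have hginj : Function.Injective g := by
        intro a b hab
        apply hp
        rw [← hgp a, ← hgp b, hab]
      have hgbij := Finite.injective_iff_bijective.mp hginj
      refine ⟨⟨⟨s, hsc⟩, Equiv.ofBijective g hgbij⟩, Finset.mem_univ _, ?_⟩
      funext i
      show (s.orderEmbOfFin hsc) (g i) = p i
      exact hgp i
    · intro q _
      rfl
  rw [hbij, Fintype.sum_prod_type]
  refine Finset.sum_congr rfl fun s _ => ?_
  -- inner sum over permutations
  have hin : ∀ σ : Perm (Fin j),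
      (M.submatrix id ((s.1.orderEmbOfFin s.2) ∘ σ)).det
        = ((Equiv.Perm.sign σ : ℤ) : ℝ) * (M.submatrix id (s.1.orderEmbOfFin s.2)).det := by
    intro σ
    have : M.submatrix id ((s.1.orderEmbOfFin s.2) ∘ σ)
        = (M.submatrix id (s.1.orderEmbOfFin s.2)).submatrix id σ := by
      rw [submatrix_submatrix]; rfl
    rw [this, det_permute']
  simp only [hin]
  rw [det_apply' (N.submatrix (s.1.orderEmbOfFin s.2) id), Finset.mul_sum]
  refine Finset.sum_congr rfl fun σ _ => ?_
  simp only [submatrix_apply, id_eq]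
  ring

lemma compound_apply (A : Matrix (Fin n) (Fin n) ℝ) (j : ℕ)
    (r c : {s : Finset (Fin n) // s.card = j}) :
    compound A j r c = (A.submatrix (r.1.orderEmbOfFin r.2) (c.1.orderEmbOfFin c.2)).det := rfl

lemma compound_mul (A B : Matrix (Fin n) (Fin n) ℝ) (j : ℕ) :
    compound (A * B) j = compound A j * compound B j := by
  ext r c
  rw [Matrix.mul_apply, compound_apply]
  have h1 : (A * B).submatrix (r.1.orderEmbOfFin r.2) (c.1.orderEmbOfFin c.2)
      = (A.submatrix (r.1.orderEmbOfFin r.2) id) * (B.submatrix id (c.1.orderEmbOfFin c.2)) := by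
    ext a b
    simp [Matrix.mul_apply]
  rw [h1, cauchyBinet]
  refine Finset.sum_congr rfl fun s _ => ?_
  rw [submatrix_submatrix, submatrix_submatrix, compound_apply, compound_apply]
  simp

lemma det_submatrix_emb_eq_zero {j : ℕ} {r c : {s : Finset (Fin n) // s.card = j}}
    (hrc : r ≠ c) (B : Matrix (Fin n) (Fin n) ℝ) (hB : ∀ i k, i ≠ k → B i k = 0) :
    (B.submatrix (r.1.orderEmbOfFin r.2) (c.1.orderEmbOfFin c.2)).det = 0 := by
  have hne : ¬ r.1 ⊆ c.1 := by
    intro hsub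
    exact hrc (Subtype.ext (Finset.eq_of_subset_of_card_le hsub (by rw [r.2, c.2])))
  obtain ⟨i, hir, hic⟩ := Finset.not_subset.mp hne
  obtain ⟨a, ha⟩ : ∃ a, r.1.orderEmbOfFin r.2 a = i := by
    have := image_orderEmbOfFin r.1 r.2
    rw [← this] at hir
    obtain ⟨a, _, ha⟩ := Finset.mem_image.mp hir
    exact ⟨a, ha⟩
  refine det_eq_zero_of_row_eq_zero a fun b => ?_
  rw [submatrix_apply, ha]
  refine hB _ _ fun h => hic ?_
  rw [h]
  exact Finset.orderEmbOfFin_mem c.1 c.2 b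

lemma compound_one (j : ℕ) : compound (1 : Matrix (Fin n) (Fin n) ℝ) j = 1 := by
  ext r c
  rcases eq_or_ne r c with rfl | hrc
  · rw [compound_apply]
    have h1 : (1 : Matrix (Fin n) (Fin n) ℝ).submatrix (r.1.orderEmbOfFin r.2)
        (r.1.orderEmbOfFin r.2) = 1 := by
      ext a b
      rcases eq_or_ne a b with rfl | hab
      · simp
      · simp [Matrix.one_apply,
          fun h => hab ((r.1.orderEmbOfFin r.2).injective h), hab]
    rw [h1, det_one, Matrix.one_apply_eq]
  · rw [compound_apply, det_submatrix_emb_eq_zero hrc _ (fun i k h => Matrix.one_apply_ne h),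
      Matrix.one_apply_ne hrc]

lemma prod_emb {j : ℕ} (s : {s : Finset (Fin n) // s.card = j}) (f : Fin n → ℝ) :
    ∏ i ∈ s.1, f i = ∏ a : Fin j, f (s.1.orderEmbOfFin s.2 a) := by
  refine (Finset.prod_bij (fun (a : Fin j) _ => s.1.orderEmbOfFin s.2 a) ?_ ?_ ?_ ?_).symm
  · intro a _; exact Finset.orderEmbOfFin_mem s.1 s.2 a
  · intro a _ b _ h; exact (s.1.orderEmbOfFin s.2).injective h
  · intro i hi
    have h2 := image_orderEmbOfFin s.1 s.2
    rw [← h2] at hi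
    obtain ⟨a, _, ha⟩ := Finset.mem_image.mp hi
    exact ⟨a, Finset.mem_univ a, ha⟩
  · intro a _; rfl

lemma compound_diagonal (d : Fin n → ℝ) (j : ℕ) :
    compound (Matrix.diagonal d) j
      = Matrix.diagonal (fun s : {s : Finset (Fin n) // s.card = j} => ∏ i ∈ s.1, d i) := by
  ext r c
  rcases eq_or_ne r c with rfl | hrc
  · rw [compound_apply, Matrix.diagonal_apply_eq]
    have h1 : (Matrix.diagonal d).submatrix (r.1.orderEmbOfFin r.2) (r.1.orderEmbOfFin r.2)
        = Matrix.diagonal (fun a : Fin j => d (r.1.orderEmbOfFin r.2 a)) := by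
      ext a b
      rcases eq_or_ne a b with rfl | hab
      · simp
      · simp [Matrix.diagonal_apply_ne _ hab,
          Matrix.diagonal_apply_ne _ (fun h => hab ((r.1.orderEmbOfFin r.2).injective h))]
    rw [h1, det_diagonal, prod_emb]
  · rw [compound_apply,
      det_submatrix_emb_eq_zero hrc _ (fun i k h => Matrix.diagonal_apply_ne _ h),
      Matrix.diagonal_apply_ne _ hrc]

open Polynomial in
lemma charpoly_diagonal' {m : Type*} [Fintype m] [DecidableEq m] (d : m → ℝ) :
    (Matrix.diagonal d).charpoly = ∏ i : m, (X - C (d i)) := by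
  rw [Matrix.charpoly]
  have h : charmatrix (Matrix.diagonal d) = Matrix.diagonal (fun i => (X : ℝ[X]) - C (d i)) := by
    refine Matrix.ext fun i k => ?_
    rcases eq_or_ne i k with rfl | hik
    · rw [charmatrix_apply_eq]; simp
    · rw [charmatrix_apply_ne _ _ _ hik, Matrix.diagonal_apply_ne _ hik,
        Matrix.diagonal_apply_ne _ hik, map_zero, neg_zero]
  rw [h, det_diagonal]

open Polynomial in
lemma charpoly_conj' {m : Type*} [Fintype m] [DecidableEq m]
    (P A Q : Matrix m m ℝ) (h1 : P * Q = 1) (h2 : Q * P = 1) :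
    (P * A * Q).charpoly = A.charpoly := by
  rw [Matrix.charpoly, Matrix.charpoly]
  have hc : ∀ (B : Matrix m m ℝ), charmatrix B
      = (Matrix.scalar m (X : ℝ[X])) - B.map C := by
    intro B; refine Matrix.ext fun i k => ?_
    rcases eq_or_ne i k with rfl | hik
    · simp [charmatrix_apply_eq, Matrix.scalar_apply]
    · simp [charmatrix_apply_ne _ _ _ hik, Matrix.scalar_apply,
        Matrix.diagonal_apply_ne _ hik]
  have hPQ : P.map (C : ℝ →+* ℝ[X]) * Q.map C = 1 := by
    rw [← Matrix.map_mul, h1, Matrix.map_one _ (map_zero C) (map_one C)]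
  have hscal : P.map (C : ℝ →+* ℝ[X]) * Matrix.scalar m (X : ℝ[X]) * Q.map C
      = Matrix.scalar m (X : ℝ[X]) := by
    rw [(Matrix.scalar_commute (X : ℝ[X]) (fun r => Commute.all _ _) (P.map C)).symm.eq,
      Matrix.mul_assoc, hPQ, Matrix.mul_one]
  have hD : charmatrix (P * A * Q) = (P.map C) * charmatrix A * (Q.map C) := by
    rw [hc, hc, Matrix.map_mul, Matrix.map_mul]
    conv_lhs => rw [← hscal]
    simp only [Matrix.mul_sub, Matrix.sub_mul, Matrix.mul_assoc]
  rw [hD, det_mul, det_mul]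
  have : (P.map (C : ℝ →+* ℝ[X])).det * (Q.map C).det = 1 := by
    rw [mul_comm, ← det_mul, ← Matrix.map_mul, h2, Matrix.map_one _ (map_zero C) (map_one C),
      det_one]
  calc (P.map (C : ℝ →+* ℝ[X])).det * (charmatrix A).det * (Q.map C).det
      = (charmatrix A).det * ((P.map C).det * (Q.map C).det) := by ring
    _ = (charmatrix A).det := by rw [this, mul_one]

lemma strictMono_castLE {j : ℕ} (hj : j ≤ n) : StrictMono (Fin.castLE hj) :=
  fun _ _ h => h

lemma filterLt_card (j : ℕ) (hj : j ≤ n) :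
    (Finset.univ.filter fun i : Fin n => (i : ℕ) < j).card = j := by
  have h : (Finset.univ.filter fun i : Fin n => (i : ℕ) < j)
      = Finset.image (Fin.castLE hj) Finset.univ := by
    ext i
    simp only [Finset.mem_filter, Finset.mem_univ, true_and, Finset.mem_image]
    constructor
    · intro hi; exact ⟨⟨(i : ℕ), hi⟩, Fin.ext rfl⟩
    · rintro ⟨a, _, rfl⟩; exact a.2
  rw [h, Finset.card_image_of_injective _ (strictMono_castLE hj).injective,
    Finset.card_univ, Fintype.card_fin]

lemma emb_filterLt (j : ℕ) (hj : j ≤ n) (h : (Finset.univ.filter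
    fun i : Fin n => (i : ℕ) < j).card = j) (a : Fin j) :
    (Finset.univ.filter fun i : Fin n => (i : ℕ) < j).orderEmbOfFin h a = Fin.castLE hj a := by
  have := Finset.orderEmbOfFin_unique h (f := Fin.castLE hj)
    (fun a => by simp [a.2]) (strictMono_castLE hj)
  exact (congrFun this a).symm

lemma emb_le {j : ℕ} (s : {s : Finset (Fin n) // s.card = j}) (a : Fin j) :
    (a : ℕ) ≤ ((s.1.orderEmbOfFin s.2) a : ℕ) :=
  strictMono_val_le (s.1.orderEmbOfFin s.2).strictMono a

lemma prod_lam_lt {lam : Fin n → ℝ} (hanti : StrictAnti lam) (hpos : ∀ i, 0 < lam i)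
    {j : ℕ} (hj : j ≤ n) (h : (Finset.univ.filter fun i : Fin n => (i : ℕ) < j).card = j)
    (s : {s : Finset (Fin n) // s.card = j})
    (hs : s ≠ ⟨Finset.univ.filter fun i : Fin n => (i : ℕ) < j, h⟩) :
    ∏ i ∈ s.1, lam i < ∏ i ∈ Finset.univ.filter (fun i : Fin n => (i : ℕ) < j), lam i := by
  set s₀ : {s : Finset (Fin n) // s.card = j} :=
    ⟨Finset.univ.filter fun i : Fin n => (i : ℕ) < j, h⟩ with hs₀
  rw [prod_emb s lam, show (Finset.univ.filter fun i : Fin n => (i : ℕ) < j) = s₀.1 from rfl,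
    prod_emb s₀ lam]
  have hle : ∀ a : Fin j, Fin.castLE hj a ≤ (s.1.orderEmbOfFin s.2) a := by
    intro a
    rw [Fin.le_def]
    exact emb_le s a
  refine Finset.prod_lt_prod (fun a _ => hpos _) (fun a _ => ?_) ?_
  · rw [emb_filterLt j hj]
    exact hanti.antitone (hle a)
  · -- some index is strictly larger
    by_contra hcon
    push_neg at hcon
    apply hs
    have hfeq : ∀ a : Fin j, (s.1.orderEmbOfFin s.2) a = Fin.castLE hj a := by
      intro a
      have h1 := hcon a (Finset.mem_univ a)
      rw [emb_filterLt j hj] at h1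
      have h2 := hanti.antitone (hle a)
      have h3 : lam ((s.1.orderEmbOfFin s.2) a) = lam (Fin.castLE hj a) := le_antisymm h2 h1
      exact hanti.injective h3
    refine Subtype.ext ?_
    rw [← image_orderEmbOfFin s.1 s.2, ← image_orderEmbOfFin s₀.1 s₀.2]
    refine Finset.image_congr ?_
    intro a _
    rw [hfeq a, emb_filterLt j hj]


end Aux

/-- if `A` has positive simple distinct eigenvalues and all exterior
products of the eigenvectors are strictly positive, then every compound matrix has
the strong Perron–Frobenius property with dominant eigenvalue `λ₁⋯λ_j`. -/
theorem stmt6 (A : Matrix (Fin n) (Fin n) ℝ) (lam : Fin n → ℝ) (x : Fin n → Fin n → ℝ)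
    (hanti : StrictAnti lam) (hpos : ∀ i, 0 < lam i)
    (hchar : charC A = ∏ i : Fin n, (X - C (lam i : ℂ)))
    (hx : ∀ i, A *ᵥ x i = lam i • x i)
    (hwedge : ∀ (j : ℕ) (hj : j ≤ n), 1 ≤ j → ∀ s, 0 < wedge x j hj s) :
    ∀ (j : ℕ), 1 ≤ j → j ≤ n →
      StrongPFAt (compound A j)
        (∏ i ∈ Finset.univ.filter (fun i : Fin n => (i : ℕ) < j), lam i) := by
  intro j hj1 hjn
  have hn1 : 1 ≤ n := hj1.trans hjn
  set m := {s : Finset (Fin n) // s.card = j}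
  set s₀ : m := ⟨Finset.univ.filter fun i : Fin n => (i : ℕ) < j, filterLt_card j hjn⟩ with hs₀def
  set μ : m → ℝ := fun s => ∏ i ∈ s.1, lam i with hμdef
  have hμ₀ : (∏ i ∈ Finset.univ.filter (fun i : Fin n => (i : ℕ) < j), lam i) = μ s₀ := rfl
  rw [hμ₀]
  have hμ₀pos : 0 < μ s₀ := Finset.prod_pos fun i _ => hpos i
  -- the eigenvector matrix
  set Y : Matrix (Fin n) (Fin n) ℝ := Matrix.of (fun i b => x b i) with hYdef
  have hAY : A * Y = Y * Matrix.diagonal lam := by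
    ext i b
    rw [Matrix.mul_apply, Matrix.mul_diagonal]
    have h1 := congrFun (hx b) i
    simp only [Matrix.mulVec, dotProduct, Pi.smul_apply, smul_eq_mul] at h1
    simpa [hYdef, mul_comm] using h1
  have hcu : (Finset.univ : Finset (Fin n)).card = n := by
    rw [Finset.card_univ, Fintype.card_fin]
  have hdetY : Y.det ≠ 0 := by
    have hw := hwedge n le_rfl hn1 ⟨Finset.univ, hcu⟩
    have hYw : wedge x n le_rfl ⟨Finset.univ, hcu⟩ = Y.det := by
      unfold wedge
      congr 1
      refine Matrix.ext fun a b => ?_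
      show x (Fin.castLE le_rfl b) ((Finset.univ.orderEmbOfFin hcu) a) = x b a
      have h2 : (Finset.univ.orderEmbOfFin hcu) a = a := by
        have := Finset.orderEmbOfFin_unique hcu
          (f := fun a : Fin n => a) (fun a => Finset.mem_univ a) strictMono_id
        exact (congrFun this a).symm
      rw [h2]
      congr 1
    rw [hYw] at hw
    exact ne_of_gt hw
  have hYunit : IsUnit Y.det := isUnit_iff_ne_zero.mpr hdetY
  have hYY' : Y * Y⁻¹ = 1 := Matrix.mul_nonsing_inv Y hYunit
  have hY'Y : Y⁻¹ * Y = 1 := Matrix.nonsing_inv_mul Y hYunit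
  have hA : A = Y * Matrix.diagonal lam * Y⁻¹ := by
    rw [← hAY, Matrix.mul_assoc, hYY', Matrix.mul_one]
  -- compound decomposition
  have hCY1 : compound Y j * compound Y⁻¹ j = 1 := by
    rw [← compound_mul, hYY', compound_one]
  have hCY2 : compound Y⁻¹ j * compound Y j = 1 := by
    rw [← compound_mul, hY'Y, compound_one]
  have hcomp : compound A j
      = compound Y j * compound (Matrix.diagonal lam) j * compound Y⁻¹ j := by
    conv_lhs => rw [hA]
    rw [compound_mul, compound_mul]
  have hcharR : (compound A j).charpoly = ∏ s : m, (X - C (μ s)) := by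
    rw [hcomp, charpoly_conj' _ _ _ hCY1 hCY2, compound_diagonal, charpoly_diagonal']
  have hcharC : charC (compound A j) = ∏ s : m, (X - C ((μ s : ℝ) : ℂ)) := by
    show ((compound A j).map Complex.ofReal).charpoly = _
    rw [show (Complex.ofReal : ℝ → ℂ) = ⇑(Complex.ofRealHom) from rfl,
      Matrix.charpoly_map, hcharR, Polynomial.map_prod]
    refine Finset.prod_congr rfl fun s _ => ?_
    simp [Polynomial.map_sub]
  have hmonic : (∏ s : m, ((X : ℂ[X]) - C ((μ s : ℝ) : ℂ))).Monic :=
    monic_prod_of_monic _ _ fun s _ => monic_X_sub_C _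
  have hne0 : charC (compound A j) ≠ 0 := by rw [hcharC]; exact hmonic.ne_zero
  have hroots : (charC (compound A j)).roots
      = Multiset.map (fun s : m => ((μ s : ℝ) : ℂ)) Finset.univ.val := by
    rw [hcharC]
    have h1 : ∏ s : m, ((X : ℂ[X]) - C ((μ s : ℝ) : ℂ))
        = (Multiset.map (fun a : ℂ => X - C a)
            (Multiset.map (fun s : m => ((μ s : ℝ) : ℂ)) Finset.univ.val)).prod := by
      rw [Multiset.map_map]
      rfl
    rw [h1, roots_multiset_prod_X_sub_C]
  have hmax : ∀ s : m, s ≠ s₀ → μ s < μ s₀ := fun s hs =>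
    prod_lam_lt hanti hpos hjn (filterLt_card j hjn) s hs
  refine ⟨hμ₀pos, ?_, ?_, ?_, ?_⟩
  · -- IsRoot
    rw [← Polynomial.mem_roots hne0, hroots]
    exact Multiset.mem_map.mpr ⟨s₀, Finset.mem_univ_val _, rfl⟩
  · -- multiplicity 1
    have hsplit : charC (compound A j)
        = (X - C ((μ s₀ : ℝ) : ℂ)) * ∏ s ∈ Finset.univ.erase s₀, (X - C ((μ s : ℝ) : ℂ)) := by
      rw [hcharC, ← Finset.mul_prod_erase Finset.univ _ (Finset.mem_univ s₀)]
    have hq0 : ¬ (∏ s ∈ Finset.univ.erase s₀, ((X : ℂ[X]) - C ((μ s : ℝ) : ℂ))).IsRoot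
        ((μ s₀ : ℝ) : ℂ) := by
      rw [Polynomial.IsRoot, Polynomial.eval_prod]
      refine Finset.prod_ne_zero_iff.mpr fun s hs => ?_
      have hss : s ≠ s₀ := Finset.ne_of_mem_erase hs
      have hlt := hmax s hss
      simp only [Polynomial.eval_sub, Polynomial.eval_X, Polynomial.eval_C, sub_ne_zero]
      intro hcon
      have : μ s₀ = μ s := by exact_mod_cast hcon
      exact ne_of_gt hlt this
    have hq0' : Polynomial.rootMultiplicity ((μ s₀ : ℝ) : ℂ)
        (∏ s ∈ Finset.univ.erase s₀, ((X : ℂ[X]) - C ((μ s : ℝ) : ℂ))) = 0 :=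
      Polynomial.rootMultiplicity_eq_zero hq0
    rw [hsplit, Polynomial.rootMultiplicity_mul (by rw [← hsplit]; exact hne0),
      hq0', Polynomial.rootMultiplicity_X_sub_C_self, add_zero]
  · -- strict dominance
    intro ν hν hne
    have hmem : ν ∈ (charC (compound A j)).roots :=
      (Polynomial.mem_roots hne0).mpr hν
    rw [hroots] at hmem
    obtain ⟨s, _, hsν⟩ := Multiset.mem_map.mp hmem
    rcases eq_or_ne s s₀ with rfl | hss
    · exact absurd hsν.symm hne
    · have hspos : 0 < μ s := Finset.prod_pos fun i _ => hpos i
      rw [← hsν, Complex.norm_real, Real.norm_eq_abs, abs_of_pos hspos]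
      exact hmax s hss
  · -- eigenvector
    refine ⟨wedge x j hjn, fun s => hwedge j hjn hj1 s, ?_⟩
    have hcol : ∀ c : m, compound Y j c s₀ = wedge x j hjn c := by
      intro c
      rw [compound_apply]
      unfold wedge
      congr 1
      refine Matrix.ext fun a b => ?_
      show Y ((c.1.orderEmbOfFin c.2) a) ((s₀.1.orderEmbOfFin s₀.2) b)
          = x (Fin.castLE hjn b) ((c.1.orderEmbOfFin c.2) a)
      rw [emb_filterLt j hjn]
      rfl
    have heq : compound A j * compound Y j
        = compound Y j * compound (Matrix.diagonal lam) j := by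
      rw [← compound_mul, ← compound_mul, hAY]
    funext r
    have h4 := congrFun (congrFun heq r) s₀
    rw [Matrix.mul_apply, Matrix.mul_apply] at h4
    have h5 : (compound A j *ᵥ wedge x j hjn) r
        = ∑ c : m, compound A j r c * wedge x j hjn c := by
      simp [Matrix.mulVec, dotProduct]
      rfl
    rw [h5]
    calc ∑ c : m, compound A j r c * wedge x j hjn c
        = ∑ c : m, compound A j r c * compound Y j c s₀ := by
          refine Finset.sum_congr rfl fun c _ => by rw [hcol c]
      _ = ∑ c : m, compound Y j r c * compound (Matrix.diagonal lam) j c s₀ := h4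
      _ = ((μ s₀) • (wedge x j hjn)) r := by
          rw [← Matrix.mul_apply, compound_diagonal, Matrix.mul_diagonal, hcol r]
          simp [mul_comm]
          exact Or.inl rfl
end

section
/- Let S be an invertible real n×n matrix such that both S and S* (where s*_{ij} = (−1)^{i+j} s_{ij}) are totally nonnegative (all minors ≥ 0). Then S is a diagonal matrix with positive diagonal entries. -/
open Matrix Polynomial Filter

variable {n : ℕ}

lemma minor_eq {m : ℕ} (A : Matrix (Fin n) (Fin n) ℝ) (r c : Finset (Fin n))
    (h : c.card = r.card) (hr : r.card = m) :
    minor A r c h =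
      (Matrix.of fun a b : Fin m =>
        A (r.orderEmbOfFin hr a) (c.orderEmbOfFin (h.trans hr) b)).det := by
  unfold minor
  rw [← Matrix.det_submatrix_equiv_self (finCongr hr)
    (Matrix.of fun a b : Fin m =>
      A (r.orderEmbOfFin hr a) (c.orderEmbOfFin (h.trans hr) b))]
  congr 1

lemma minor_singleton (A : Matrix (Fin n) (Fin n) ℝ) (i j : Fin n)
    (h : ({j} : Finset (Fin n)).card = ({i} : Finset (Fin n)).card) :
    minor A {i} {j} h = A i j := by
  rw [minor_eq A {i} {j} h (Finset.card_singleton i), Matrix.det_fin_one]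
  simp

lemma card_pair' {i k : Fin n} (hik : i < k) : ({i, k} : Finset (Fin n)).card = 2 :=
  Finset.card_pair hik.ne

lemma orderEmbOfFin_pair {i k : Fin n} (hik : i < k) :
    ⇑(({i, k} : Finset (Fin n)).orderEmbOfFin (card_pair' hik)) = ![i, k] := by
  symm
  apply Finset.orderEmbOfFin_unique
  · intro x; fin_cases x <;> simp
  · intro a b hab
    fin_cases a <;> fin_cases b <;> simp_all [hik]

lemma minor_pair (A : Matrix (Fin n) (Fin n) ℝ) {i k j l : Fin n} (hik : i < k) (hjl : j < l)
    (h : ({j, l} : Finset (Fin n)).card = ({i, k} : Finset (Fin n)).card) :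
    minor A {i, k} {j, l} h = A i j * A k l - A i l * A k j := by
  rw [minor_eq A {i, k} {j, l} h (card_pair' hik), Matrix.det_fin_two]
  simp only [Matrix.of_apply]
  rw [show ((h.trans (card_pair' hik)) : ({j,l} : Finset (Fin n)).card = 2) = card_pair' hjl
    from rfl]
  rw [orderEmbOfFin_pair hik, orderEmbOfFin_pair hjl]
  simp

lemma entry_nonneg {S : Matrix (Fin n) (Fin n) ℝ} (h1 : TotNonneg S) (i j : Fin n) :
    0 ≤ S i j := by
  have := h1 {i} {j} (by simp)
  rwa [minor_singleton] at this

lemma entry_odd_zero {S : Matrix (Fin n) (Fin n) ℝ} (h1 : TotNonneg S)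
    (h2 : TotNonneg (checker S)) (i j : Fin n) (hodd : Odd ((i : ℕ) + (j : ℕ))) :
    S i j = 0 := by
  have ha := entry_nonneg h1 i j
  have hb := entry_nonneg h2 i j
  have : checker S i j = -S i j := by
    simp [checker, hodd.neg_one_pow]
  rw [this] at hb
  linarith

lemma minor2_nonneg {S : Matrix (Fin n) (Fin n) ℝ} (h1 : TotNonneg S) {i k j l : Fin n}
    (hik : i < k) (hjl : j < l) : 0 ≤ S i j * S k l - S i l * S k j := by
  have h : ({j, l} : Finset (Fin n)).card = ({i, k} : Finset (Fin n)).card := by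
    rw [card_pair' hik, card_pair' hjl]
  have := h1 {i, k} {j, l} h
  rwa [minor_pair S hik hjl] at this

lemma sum_eq_sum_castLE {J : ℕ} (hJn : J + 1 ≤ n) (f : Fin n → ℝ)
    (hf : ∀ c : Fin n, J + 1 ≤ (c : ℕ) → f c = 0) :
    ∑ c, f c = ∑ c : Fin (J + 1), f (Fin.castLE hJn c) := by
  calc ∑ c, f c = ∑ c ∈ Finset.univ.map (Fin.castLEEmb hJn), f c := by
        symm
        apply Finset.sum_subset (Finset.subset_univ _)
        intro x _ hx
        apply hf
        by_contra hlt
        push_neg at hlt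
        exact hx (Finset.mem_map.2 ⟨⟨(x : ℕ), hlt⟩, Finset.mem_univ _, by simp [Fin.castLEEmb]⟩)
    _ = ∑ c : Fin (J + 1), f (Fin.castLE hJn c) := by rw [Finset.sum_map]; rfl

lemma upper_zero (S : Matrix (Fin n) (Fin n) ℝ) (hS : IsUnit S.det)
    (h1 : TotNonneg S) (h2 : TotNonneg (checker S))
    {i j : Fin n} (hij : (i : ℕ) < (j : ℕ)) : S i j = 0 := by
  by_contra hne
  have hpos : 0 < S i j := (entry_nonneg h1 i j).lt_of_ne (Ne.symm hne)
  have hev : Even ((i : ℕ) + (j : ℕ)) := by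
    rcases Nat.even_or_odd ((i : ℕ) + (j : ℕ)) with he | ho
    · exact he
    · exact absurd (entry_odd_zero h1 h2 i j ho) hne
  obtain ⟨t, ht⟩ := hev
  have hij2 : (i : ℕ) + 2 ≤ (j : ℕ) := by omega
  have hkn : (i : ℕ) + 1 < n := by have := j.isLt; omega
  set k : Fin n := ⟨(i : ℕ) + 1, hkn⟩ with hk
  have hik : i < k := by simp [Fin.lt_def, hk]
  have hkj : (k : ℕ) < (j : ℕ) := by simp [hk]; omega
  have hkj0 : S k j = 0 := by
    apply entry_odd_zero h1 h2
    simp only [hk]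
    exact Nat.odd_iff.2 (by omega)
  have hrow : ∀ c : Fin n, (c : ℕ) ≤ (j : ℕ) → S k c = 0 := by
    intro c hc
    rcases eq_or_lt_of_le hc with heq | hlt
    · rw [show c = j from Fin.ext heq]; exact hkj0
    · have hm := minor2_nonneg h1 hik (show c < j from hlt)
      rw [hkj0] at hm
      have h0 := entry_nonneg h1 k c
      have h0' := entry_nonneg h1 i c
      nlinarith
  have hdetne : S.det ≠ 0 := hS.ne_zero
  by_cases hallz : ∀ l, S k l = 0
  · exact hdetne (Matrix.det_eq_zero_of_row_eq_zero k hallz)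
  push_neg at hallz
  obtain ⟨l, hl⟩ := hallz
  have hjl : (j : ℕ) < (l : ℕ) := by
    by_contra hle
    push_neg at hle
    exact hl (hrow l hle)
  have hklpos : 0 < S k l := (entry_nonneg h1 k l).lt_of_ne (Ne.symm hl)
  have hzero : ∀ r c : Fin n, (k : ℕ) ≤ (r : ℕ) → (c : ℕ) ≤ (j : ℕ) → S r c = 0 := by
    intro r c hr hc
    rcases eq_or_lt_of_le hr with heq | hlt
    · rw [show r = k from Fin.ext heq.symm]; exact hrow c hc
    · have hm := minor2_nonneg h1 (show k < r from hlt) (show c < l from lt_of_le_of_lt hc hjl)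
      rw [hrow c hc] at hm
      have h0 := entry_nonneg h1 r c
      nlinarith
  -- linear algebra contradiction
  set K : ℕ := (i : ℕ) + 1 with hK
  set J : ℕ := (j : ℕ) with hJ
  have hKn : K ≤ n := hkn.le
  have hJn : J + 1 ≤ n := j.isLt
  have hJK : K < J + 1 := by omega
  set w : Fin (J + 1) → (Fin K → ℝ) :=
    fun c r => S (Fin.castLE hKn r) (Fin.castLE hJn c) with hw
  have hnli : ¬ LinearIndependent ℝ w := by
    intro hli
    have hcard := hli.fintype_card_le_finrank
    rw [Fintype.card_fin, Module.finrank_pi] at hcard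
    simp at hcard
    omega
  rw [Fintype.not_linearIndependent_iff] at hnli
  obtain ⟨g, hg, c0, hc0⟩ := hnli
  set v : Fin n → ℝ := fun c => if hc : (c : ℕ) < J + 1 then g ⟨(c : ℕ), hc⟩ else 0 with hv
  have hvcast : ∀ c : Fin (J + 1), v (Fin.castLE hJn c) = g c := by
    intro c
    simp [hv]
    intro h; have := c.isLt; omega
  have hvzero : ∀ c : Fin n, J + 1 ≤ (c : ℕ) → v c = 0 := by
    intro c hc
    simp [hv, show ¬ ((c : ℕ) < J + 1) by omega]
    intro h; omega
  have hSv : S *ᵥ v = 0 := by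
    funext r
    show ∑ c, S r c * v c = 0
    by_cases hr : (r : ℕ) < K
    · have hrel := congrFun hg ⟨(r : ℕ), hr⟩
      simp only [Finset.sum_apply, Pi.smul_apply, smul_eq_mul, Pi.zero_apply, hw] at hrel
      have hcastr : Fin.castLE hKn ⟨(r : ℕ), hr⟩ = r := Fin.ext rfl
      rw [sum_eq_sum_castLE hJn (fun c => S r c * v c)
        (fun c hc => by show S r c * v c = 0; rw [hvzero c hc, mul_zero])]
      rw [← hrel]
      apply Finset.sum_congr rfl
      intro c _
      rw [hvcast c, hcastr, mul_comm]
    · apply Finset.sum_eq_zero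
      intro c _
      show S r c * v c = 0
      by_cases hc : (c : ℕ) ≤ J
      · rw [hzero r c (by simp [hk]; omega) hc, zero_mul]
      · rw [hvzero c (by omega), mul_zero]
  have hinj : Function.Injective S.mulVec :=
    Matrix.mulVec_injective_iff_isUnit.2 ((Matrix.isUnit_iff_isUnit_det S).2 hS)
  have hv0 : v = 0 := by
    apply hinj
    rw [hSv, Matrix.mulVec_zero]
  have := hvcast c0
  rw [hv0] at this
  exact hc0 this.symm

lemma minor_transpose (S : Matrix (Fin n) (Fin n) ℝ) (r c : Finset (Fin n))
    (h : c.card = r.card) : minor Sᵀ r c h = minor S c r h.symm := by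
  rw [minor_eq Sᵀ r c h rfl, minor_eq S c r h.symm h, ← Matrix.det_transpose]
  congr 1

lemma totNonneg_transpose {S : Matrix (Fin n) (Fin n) ℝ} (h1 : TotNonneg S) :
    TotNonneg Sᵀ := by
  intro r c h
  rw [minor_transpose]
  exact h1 c r h.symm

lemma checker_transpose (S : Matrix (Fin n) (Fin n) ℝ) : checker Sᵀ = (checker S)ᵀ := by
  ext i j
  simp [checker, Matrix.transpose_apply, add_comm]

/-- an invertible matrix that is totally nonnegative together with its
checkerboard transform is a positive diagonal matrix. -/
theorem stmt14 (S : Matrix (Fin n) (Fin n) ℝ) (hS : IsUnit S.det)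
    (h1 : TotNonneg S) (h2 : TotNonneg (checker S)) :
    ∃ d : Fin n → ℝ, (∀ i, 0 < d i) ∧ S = diagonal d := by
  have hT : IsUnit Sᵀ.det := by rwa [Matrix.det_transpose]
  have h1T := totNonneg_transpose h1
  have h2T : TotNonneg (checker Sᵀ) := by
    rw [checker_transpose]; exact totNonneg_transpose h2
  have hoff : ∀ i j : Fin n, i ≠ j → S i j = 0 := by
    intro i j hne
    rcases lt_or_gt_of_ne hne with hlt | hgt
    · exact upper_zero S hS h1 h2 hlt
    · exact upper_zero Sᵀ hT h1T h2T hgt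
  have hdiag : S = diagonal (fun i => S i i) := by
    ext i j
    by_cases hij : i = j
    · subst hij; simp
    · simp [Matrix.diagonal_apply_ne _ hij, hoff i j hij]
  refine ⟨fun i => S i i, fun i => ?_, hdiag⟩
  have hprod : S.det = ∏ i, S i i := by
    conv_lhs => rw [hdiag]
    rw [Matrix.det_diagonal]
  have hne : (∏ i, S i i) ≠ 0 := hprod ▸ hS.ne_zero
  have := Finset.prod_ne_zero_iff.1 hne i (Finset.mem_univ i)
  exact (entry_nonneg h1 i i).lt_of_ne (Ne.symm this)
end
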